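/- arXiv:2009.04430 — 4 statements merged into one kernel-verified Lean document; each statement's English description precedes it below -/
import Mathlib

section
/- Let Ω ⊂ ℝ³ be open, bounded and convex with L³(Ω) = 1 and Ω ⊂ B_R(0) for some R > 0, let m be a mass vector, T > 0, and let z = (z_1,…,z_N) : [0,T] → ℝ^{3N} be a continuously differentiable solution of the seed ODE with z(0) = z̄ = (z̄_1,…,z̄_N). Then for each i ∈ {1,…,N}: |z_i(t)| ≤ |z̄_i| + R t for all t ∈ [0,T], and |ż_i(t)| ≤ |z̄_i| + R(1+T) for all t ∈ (0,T). -/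
open MeasureTheory Set Filter
open scoped ENNReal Topology RealInnerProductSpace

noncomputable section

/-- Geostrophic space: `ℝ³` with the Euclidean norm. -/
abbrev E3 : Type := EuclideanSpace ℝ (Fin 3)

/-- The matrix `J` encoding planetary rotation: `J₁₂ = -1`, `J₂₁ = 1`, all other entries `0`. -/
def matJ : Matrix (Fin 3) (Fin 3) ℝ := !![0, -1, 0; 1, 0, 0; 0, 0, 0]

/-- `J` as a (continuous) linear map on `ℝ³`. -/
def J : E3 →L[ℝ] E3 := LinearMap.toContinuousLinearMap (Matrix.toEuclideanLin matJ)

/-- The Laguerre cell `C_i(z, w)` of `Ω` generated by seeds `z` and weights `w`. -/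
def lagCell {N : ℕ} (Ω : Set E3) (z : Fin N → E3) (w : Fin N → ℝ) (i : Fin N) : Set E3 :=
  {x | x ∈ Ω ∧ ∀ j, ‖x - z i‖ ^ 2 - w i ≤ ‖x - z j‖ ^ 2 - w j}

/-- `z : [0,T] → ℝ^{3N}` is a continuously differentiable solution of the seed ODE
`ż_i = J (z_i - x_i(z))`, where `x_i(z)` is the centroid of the `i`-th cell of the optimal
Laguerre tessellation of `Ω` with masses `m`. -/
def SeedODESol (Ω : Set E3) {N : ℕ} (m : Fin N → ℝ) (T : ℝ) (z : ℝ → Fin N → E3) : Prop :=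
  ContDiffOn ℝ 1 z (Icc 0 T) ∧
  ∀ t ∈ Icc (0:ℝ) T,
    (∀ i j : Fin N, i ≠ j → z t i ≠ z t j) ∧
    ∃ w : Fin N → ℝ,
      (∀ j, volume (lagCell Ω (z t) w j) = ENNReal.ofReal (m j)) ∧
      ∀ i, HasDerivWithinAt (fun s => z s i)
        (J (z t i - (m i)⁻¹ • ∫ x in lagCell Ω (z t) w i, x)) (Icc 0 T) t

lemma inner_J_self (y : E3) : ⟪J y, y⟫ = 0 := by
  simp [J, matJ, Matrix.toEuclideanLin, Matrix.mulVec, dotProduct, Fin.sum_univ_three, Matrix.vecHead, Matrix.vecTail,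
    PiLp.inner_apply, RCLike.inner_apply]
  ring

lemma norm_J_le (y : E3) : ‖J y‖ ≤ ‖y‖ := by
  rw [EuclideanSpace.norm_eq, EuclideanSpace.norm_eq]
  apply Real.sqrt_le_sqrt
  simp [J, matJ, Matrix.toEuclideanLin, Matrix.mulVec, dotProduct, Fin.sum_univ_three, Matrix.vecHead, Matrix.vecTail]
  nlinarith [sq_nonneg (y 2)]

/-- **A priori estimates for solutions of the seed ODE** (Lemma 4.11 of
Bourne, Egan, Pelloni, Wilkinson): `|z_i(t)| ≤ |z̄_i| + Rt` on `[0,T]` and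
`|ż_i(t)| ≤ |z̄_i| + R(1+T)` on `(0,T)`. -/
theorem seed_ode_apriori_estimates
    (Ω : Set E3) (hΩo : IsOpen Ω) (hΩb : Bornology.IsBounded Ω) (hΩc : Convex ℝ Ω)
    (hΩv : volume Ω = 1) (R : ℝ) (hR : 0 < R) (hΩR : Ω ⊆ Metric.ball 0 R)
    {N : ℕ} (m : Fin N → ℝ) (hm : ∀ i, 0 < m i) (hm1 : ∑ i, m i = 1)
    (T : ℝ) (hT : 0 < T) (z : ℝ → Fin N → E3) (zbar : Fin N → E3)
    (hsol : SeedODESol Ω m T z) (hinit : z 0 = zbar) :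
    ∀ i : Fin N,
      (∀ t ∈ Icc (0:ℝ) T, ‖z t i‖ ≤ ‖zbar i‖ + R * t) ∧
      ∀ t ∈ Ioo (0:ℝ) T, ∀ v : E3,
        HasDerivWithinAt (fun s => z s i) v (Icc 0 T) t →
        ‖v‖ ≤ ‖zbar i‖ + R * (1 + T) := by
  intro i
  obtain ⟨hreg, hode⟩ := hsol
  choose! w hvol hder using fun t ht => (hode t ht).2
  set a := ‖zbar i‖ with ha
  have ha0 : 0 ≤ a := norm_nonneg _
  set c : ℝ → E3 := fun t => (m i)⁻¹ • ∫ x in lagCell Ω (z t) (w t) i, x with hc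
  -- centroid bound
  have hcR : ∀ t ∈ Icc (0:ℝ) T, ‖c t‖ ≤ R := by
    intro t ht
    set S := lagCell Ω (z t) (w t) i with hS
    have hSv : volume S = ENNReal.ofReal (m i) := hvol t ht i
    have hfin : volume S < ⊤ := by rw [hSv]; exact ENNReal.ofReal_lt_top
    have hbound : ∀ x ∈ S, ‖(x : E3)‖ ≤ R := fun x hx =>
      (mem_ball_zero_iff.mp (hΩR hx.1)).le
    have hint : ‖∫ x in S, (x : E3)‖ ≤ R * (volume S).toReal :=
      norm_setIntegral_le_of_norm_le_const hfin hbound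
    have htr : (volume S).toReal = m i := by rw [hSv, ENNReal.toReal_ofReal (hm i).le]
    rw [hc]
    simp only [norm_smul, norm_inv, Real.norm_eq_abs, abs_of_pos (hm i)]
    calc (m i)⁻¹ * ‖∫ x in S, (x : E3)‖ ≤ (m i)⁻¹ * (R * m i) := by
          apply mul_le_mul_of_nonneg_left _ (inv_nonneg.mpr (hm i).le)
          rw [← htr]; exact hint
      _ = R := by rw [mul_comm R (m i), inv_mul_cancel_left₀ (hm i).ne']
  have hderiv : ∀ t ∈ Icc (0:ℝ) T,
      HasDerivWithinAt (fun s => z s i) (J (z t i - c t)) (Icc 0 T) t :=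
    fun t ht => hder t ht i
  have hzc : ContinuousOn (fun s => z s i) (Icc (0:ℝ) T) :=
    (continuous_apply i).comp_continuousOn hreg.continuousOn
  -- the norm bound
  have key : ∀ t ∈ Icc (0:ℝ) T, ‖z t i‖ ≤ a + R * t := by
    intro t ht
    have hε : ∀ ε > (0:ℝ), ‖z t i‖ ≤ a + (R + ε) * t + ε := by
      intro ε hε
      have hBd : ∀ s : ℝ, HasDerivAt (fun s => (a + (R + ε) * s + ε) ^ 2)
          (2 * (a + (R + ε) * s + ε) * (R + ε)) s := by
        intro s
        have h1 : HasDerivAt (fun s : ℝ => a + (R + ε) * s + ε) (R + ε) s := by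
          simpa using (((hasDerivAt_id s).const_mul (R + ε)).const_add a).add_const ε
        simpa [pow_one] using h1.fun_pow 2
      have hf' : ∀ x ∈ Ico (0:ℝ) T, HasDerivWithinAt (fun s => ‖z s i‖ ^ 2)
          (2 * ⟪J (z x i - c x), z x i⟫) (Ici x) x := by
        intro x hx
        have h1 := ((hderiv x ⟨hx.1, hx.2.le⟩).inner ℝ
          (hderiv x ⟨hx.1, hx.2.le⟩)).mono_of_mem_nhdsWithin (Icc_mem_nhdsGE_of_mem hx)
        have h2 : (fun s => ⟪z s i, z s i⟫) = fun s => ‖z s i‖ ^ 2 := by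
          funext s; rw [real_inner_self_eq_norm_sq]
        rw [h2] at h1
        convert h1 using 1
        · rfl
        · rfl
        rw [real_inner_comm]; ring
      have hle : ∀ x ∈ Icc (0:ℝ) T, ‖z x i‖ ^ 2 ≤ (a + (R + ε) * x + ε) ^ 2 := by
        refine image_le_of_deriv_right_lt_deriv_boundary'
          (B := fun s => (a + (R + ε) * s + ε) ^ 2)
          (B' := fun s => 2 * (a + (R + ε) * s + ε) * (R + ε))
          (hzc.norm.pow 2) hf' ?ha
          ((((continuous_const.add (continuous_const.mul continuous_id)).add
            continuous_const).pow 2).continuousOn)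
          (fun x _ => (hBd x).hasDerivWithinAt) ?bd
        case ha =>
          have h0 : z 0 i = zbar i := congrFun hinit i
          show ‖z 0 i‖ ^ 2 ≤ (a + (R + ε) * 0 + ε) ^ 2
          rw [h0, ← ha]
          show a ^ 2 ≤ (a + (R + ε) * 0 + ε) ^ 2
          nlinarith
        case bd =>
          intro x hx heq
          change ‖z x i‖ ^ 2 = (a + (R + ε) * x + ε) ^ 2 at heq
          have hρ : (0:ℝ) < a + (R + ε) * x + ε := by nlinarith [hx.1]
          have hzx : ‖z x i‖ = a + (R + ε) * x + ε := by
            nlinarith [norm_nonneg (z x i), heq, hρ]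
          have hJz : ⟪J (z x i - c x), z x i⟫ = ⟪J (z x i) - J (c x), z x i⟫ := by
            rw [map_sub]
          have hsplit : ⟪J (z x i) - J (c x), z x i⟫ = -⟪J (c x), z x i⟫ := by
            rw [inner_sub_left, inner_J_self]; ring
          have hcs : -⟪J (c x), z x i⟫ ≤ ‖J (c x)‖ * ‖z x i‖ := by
            have := real_inner_le_norm (-(J (c x))) (z x i)
            simpa [inner_neg_left] using this
          have hJc : ‖J (c x)‖ ≤ R := (norm_J_le _).trans (hcR x ⟨hx.1, hx.2.le⟩)
          have : 2 * ⟪J (z x i - c x), z x i⟫ ≤ 2 * (R * ‖z x i‖) := by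
            rw [hJz, hsplit]
            have h3 : ‖J (c x)‖ * ‖z x i‖ ≤ R * ‖z x i‖ :=
              mul_le_mul_of_nonneg_right hJc (norm_nonneg _)
            linarith [hcs.trans h3]
          calc 2 * ⟪J (z x i - c x), z x i⟫ ≤ 2 * (R * ‖z x i‖) := this
            _ < 2 * (a + (R + ε) * x + ε) * (R + ε) := by rw [hzx]; nlinarith
      have := hle t ht
      have hρ : (0:ℝ) ≤ a + (R + ε) * t + ε := by nlinarith [ht.1]
      nlinarith [norm_nonneg (z t i)]
    -- take ε → 0
    have h2 : ∀ δ > (0:ℝ), ‖z t i‖ ≤ a + R * t + δ := by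
      intro δ hδ
      have ht1 : (0:ℝ) < t + 1 := by nlinarith [ht.1]
      have := hε (δ / (t + 1)) (by positivity)
      have hdd : (R + δ / (t + 1)) * t + δ / (t + 1) ≤ R * t + δ := by
        rw [add_mul]
        have : δ / (t + 1) * t + δ / (t + 1) = δ := by field_simp
        linarith [this]
      linarith
    exact le_of_forall_pos_le_add h2
  refine ⟨key, ?_⟩
  intro t ht v hv
  have huniq : UniqueDiffWithinAt ℝ (Icc (0:ℝ) T) t := (uniqueDiffOn_Icc hT) t ⟨ht.1.le, ht.2.le⟩
  have h1 := hderiv t ⟨ht.1.le, ht.2.le⟩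
  have hveq : v = J (z t i - c t) := by
    rw [← hv.derivWithin huniq, ← h1.derivWithin huniq]
  rw [hveq]
  have h2 : ‖J (z t i - c t)‖ ≤ ‖z t i‖ + ‖c t‖ :=
    (norm_J_le _).trans ((norm_sub_le _ _))
  have h3 := key t ⟨ht.1.le, ht.2.le⟩
  have h4 := hcR t ⟨ht.1.le, ht.2.le⟩
  have h5 : R * t ≤ R * T := mul_le_mul_of_nonneg_left ht.2.le hR.le
  calc ‖J (z t i - c t)‖ ≤ ‖z t i‖ + ‖c t‖ := h2
    _ ≤ (a + R * t) + R := by linarith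
    _ ≤ a + R * (1 + T) := by nlinarith
end
end

section
/- Let Ω ⊂ ℝ³ be open, bounded and convex with L³(Ω) = 1, let m be a mass vector, T > 0, and let z = (z_1,…,z_N) : [0,T] → ℝ^{3N} be a continuously differentiable solution of the seed ODE, with associated weight vectors w(t) satisfying L³(C_j(z(t),w(t))) = m_j for all j and t. Then the geostrophic energy t ↦ E(t) := ½ Σ_{i=1}^N ∫_{C_i(z(t),w(t))} |x − z_i(t)|² dx − ½ Σ_{i=1}^N m_i (z_i(t)·e₃)² − ½ ∫_Ω x₃² dx is constant on [0,T]. -/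
open MeasureTheory Set Filter
open scoped ENNReal Topology RealInnerProductSpace

noncomputable section

/-! ### Auxiliary lemmas -/

section Aux

open Bornology

lemma volume_hyperplane (v : E3) (hv : v ≠ 0) (c : ℝ) :
    volume {x : E3 | ⟪v, x⟫ = c} = 0 := by
  set x₀ : E3 := (c / ‖v‖ ^ 2) • v with hx₀
  have hvv : ⟪v, v⟫ = ‖v‖ ^ 2 := real_inner_self_eq_norm_sq v
  have hn : ‖v‖ ^ 2 ≠ 0 := pow_ne_zero 2 (norm_ne_zero_iff.2 hv)
  have hker : LinearMap.ker ((innerSL ℝ v : E3 →L[ℝ] ℝ) : E3 →ₗ[ℝ] ℝ) ≠ ⊤ := by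
    intro h
    have hm : v ∈ LinearMap.ker ((innerSL ℝ v : E3 →L[ℝ] ℝ) : E3 →ₗ[ℝ] ℝ) := by rw [h]; trivial
    have : (innerSL ℝ v) v = 0 := hm
    simp only [innerSL_apply_apply, hvv] at this
    exact hn this
  have hset : {x : E3 | ⟪v, x⟫ = c}
      = (AffineSubspace.mk' x₀ (LinearMap.ker ((innerSL ℝ v : E3 →L[ℝ] ℝ) : E3 →ₗ[ℝ] ℝ) : Submodule ℝ E3) : Set E3) := by
    ext x
    simp only [mem_setOf_eq, SetLike.mem_coe, AffineSubspace.mem_mk',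
      vsub_eq_sub, LinearMap.mem_ker, ContinuousLinearMap.coe_coe, innerSL_apply_apply]
    rw [inner_sub_right, hx₀, real_inner_smul_right, hvv]
    constructor
    · intro hx; rw [hx]; field_simp; ring
    · intro hx
      have : ⟪v, x⟫ = c / ‖v‖ ^ 2 * ‖v‖ ^ 2 := by linarith
      rw [this]; field_simp
  rw [hset]
  refine Measure.addHaar_affineSubspace _ _ ?_
  intro h
  apply hker
  have := congrArg AffineSubspace.direction h
  rwa [AffineSubspace.direction_mk', AffineSubspace.direction_top] at this

lemma lagCell_subset {N : ℕ} (Ω : Set E3) (z : Fin N → E3) (w : Fin N → ℝ) (i : Fin N) :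
    lagCell Ω z w i ⊆ Ω := fun _ hx => hx.1

lemma lagCell_measurable {N : ℕ} {Ω : Set E3} (hΩ : MeasurableSet Ω) (z : Fin N → E3)
    (w : Fin N → ℝ) (i : Fin N) : MeasurableSet (lagCell Ω z w i) := by
  have : lagCell Ω z w i = Ω ∩ ⋂ j, {x | ‖x - z i‖ ^ 2 - w i ≤ ‖x - z j‖ ^ 2 - w j} := by
    ext x; simp [lagCell]
  rw [this]
  refine hΩ.inter (MeasurableSet.iInter fun j => ?_)
  apply measurableSet_le <;> fun_prop

lemma lagCell_iUnion {N : ℕ} [Nonempty (Fin N)] (Ω : Set E3) (z : Fin N → E3) (w : Fin N → ℝ) :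
    ⋃ i, lagCell Ω z w i = Ω := by
  apply Subset.antisymm (iUnion_subset fun i => lagCell_subset Ω z w i)
  intro x hx
  obtain ⟨i, -, hi⟩ := Finset.exists_min_image Finset.univ
    (fun j => ‖x - z j‖ ^ 2 - w j) ⟨Classical.arbitrary _, Finset.mem_univ _⟩
  exact mem_iUnion.2 ⟨i, hx, fun j => hi j (Finset.mem_univ j)⟩

lemma lagCell_aedisjoint {N : ℕ} {Ω : Set E3} {z : Fin N → E3}
    (hz : ∀ i j : Fin N, i ≠ j → z i ≠ z j) (w : Fin N → ℝ) :
    Pairwise (Function.onFun (AEDisjoint volume) (lagCell Ω z w)) := by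
  intro i j hij
  have hsub : lagCell Ω z w i ∩ lagCell Ω z w j ⊆
      {x : E3 | ⟪(2:ℝ) • (z j - z i), x⟫ = ‖z j‖ ^ 2 - w j - ‖z i‖ ^ 2 + w i} := by
    rintro x ⟨hxi, hxj⟩
    have h1 := hxi.2 j
    have h2 := hxj.2 i
    have he : ‖x - z i‖ ^ 2 - w i = ‖x - z j‖ ^ 2 - w j := le_antisymm h1 h2
    rw [norm_sub_sq_real, norm_sub_sq_real] at he
    simp only [mem_setOf_eq, real_inner_smul_left, inner_sub_left]
    have h3 : ⟪x, z j⟫ = ⟪z j, x⟫ := real_inner_comm _ _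
    have h4 : ⟪x, z i⟫ = ⟪z i, x⟫ := real_inner_comm _ _
    nlinarith [he]
  exact measure_mono_null hsub (volume_hyperplane _
    (smul_ne_zero two_ne_zero (sub_ne_zero.2 (hz j i hij.symm))) _)

lemma integrableOn_of_bounded {F : Type*} [NormedAddCommGroup F] [NormedSpace ℝ F]
    {Ω s : Set E3} (hΩb : IsBounded Ω) (hs : MeasurableSet s)
    (hsub : s ⊆ Ω) {f : E3 → F} (hf : Continuous f) : IntegrableOn f s volume := by
  obtain ⟨r, hr⟩ := hΩb.subset_closedBall 0
  exact ((hf.continuousOn.integrableOn_compact (isCompact_closedBall (0:E3) r))).mono_set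
    (hsub.trans hr)

lemma sum_integral_lagCell {F : Type*} [NormedAddCommGroup F] [NormedSpace ℝ F]
    {N : ℕ} {Ω : Set E3} (hΩm : MeasurableSet Ω) (hΩb : IsBounded Ω)
    [Nonempty (Fin N)] {z : Fin N → E3} (hz : ∀ i j : Fin N, i ≠ j → z i ≠ z j)
    (w : Fin N → ℝ) {f : E3 → F} (hf : Continuous f) :
    ∑ i, ∫ x in lagCell Ω z w i, f x = ∫ x in Ω, f x := by
  have h1 := integral_iUnion_ae (μ := volume) (f := f)
    (fun i => (lagCell_measurable hΩm z w i).nullMeasurableSet)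
    (lagCell_aedisjoint hz w)
    (by rw [lagCell_iUnion Ω z w]
        exact integrableOn_of_bounded hΩb hΩm (subset_refl _) hf)
  rw [lagCell_iUnion Ω z w] at h1
  rw [h1, tsum_fintype]

lemma opt_ineq {N : ℕ} [Nonempty (Fin N)] {Ω : Set E3} (hΩm : MeasurableSet Ω)
    (hΩb : IsBounded Ω) {p q : Fin N → E3}
    (hp : ∀ i j : Fin N, i ≠ j → p i ≠ p j) (hq : ∀ i j : Fin N, i ≠ j → q i ≠ q j)
    (ωp ωq : Fin N → ℝ) {m : Fin N → ℝ} (hm : ∀ i, 0 ≤ m i)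
    (hmp : ∀ i, volume (lagCell Ω p ωp i) = ENNReal.ofReal (m i))
    (hmq : ∀ i, volume (lagCell Ω q ωq i) = ENNReal.ofReal (m i)) :
    ∑ i, ∫ x in lagCell Ω p ωp i, ‖x - p i‖ ^ 2
      ≤ ∑ i, ∫ x in lagCell Ω q ωq i, ‖x - p i‖ ^ 2 := by
  set g : Fin N → E3 → ℝ := fun i x => ‖x - p i‖ ^ 2 - ωp i with hg
  set h : E3 → ℝ := fun x => Finset.univ.inf' Finset.univ_nonempty (fun j => g j x) with hh
  have hgc : ∀ i, Continuous (g i) := by intro i; fun_prop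
  have hhc : Continuous h := by
    rw [continuous_iff_continuousAt]
    intro x
    exact ContinuousAt.finset_inf'_apply Finset.univ_nonempty
      (fun i _ => (hgc i).continuousAt)
  have key : ∀ (z' : Fin N → E3) (w' : Fin N → ℝ) (i : Fin N),
      volume (lagCell Ω z' w' i) = ENNReal.ofReal (m i) →
      ∫ x in lagCell Ω z' w' i, g i x
        = (∫ x in lagCell Ω z' w' i, ‖x - p i‖ ^ 2) - m i * ωp i := by
    intro z' w' i hv
    have h1 : IntegrableOn (fun x => ‖x - p i‖ ^ 2) (lagCell Ω z' w' i) volume :=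
      integrableOn_of_bounded hΩb (lagCell_measurable hΩm z' w' i)
        (lagCell_subset _ _ _ _) (by fun_prop)
    rw [hg]
    rw [integral_sub h1 (integrableOn_const (by rw [hv]; exact ENNReal.ofReal_ne_top)),
      setIntegral_const, measureReal_def, hv, ENNReal.toReal_ofReal (hm i), smul_eq_mul, mul_comm]
  have step1 : ∀ i, ∫ x in lagCell Ω q ωq i, h x ≤ ∫ x in lagCell Ω q ωq i, g i x := by
    intro i
    refine setIntegral_mono_on
      (integrableOn_of_bounded hΩb (lagCell_measurable hΩm q ωq i) (lagCell_subset _ _ _ _) hhc)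
      (integrableOn_of_bounded hΩb (lagCell_measurable hΩm q ωq i) (lagCell_subset _ _ _ _)
        (hgc i))
      (lagCell_measurable hΩm q ωq i) ?_
    intro x _
    exact Finset.inf'_le _ (Finset.mem_univ i)
  have step3 : ∀ i, ∫ x in lagCell Ω p ωp i, h x = ∫ x in lagCell Ω p ωp i, g i x := by
    intro i
    refine setIntegral_congr_fun (lagCell_measurable hΩm p ωp i) ?_
    intro x hx
    refine le_antisymm (Finset.inf'_le _ (Finset.mem_univ i)) ?_
    exact Finset.le_inf' _ _ fun j _ => hx.2 j
  have step2 : ∑ i, ∫ x in lagCell Ω q ωq i, h x = ∑ i, ∫ x in lagCell Ω p ωp i, h x := by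
    rw [sum_integral_lagCell hΩm hΩb hq ωq hhc, sum_integral_lagCell hΩm hΩb hp ωp hhc]
  have chain : ∑ i, ∫ x in lagCell Ω p ωp i, g i x ≤ ∑ i, ∫ x in lagCell Ω q ωq i, g i x :=
    calc ∑ i, ∫ x in lagCell Ω p ωp i, g i x
        = ∑ i, ∫ x in lagCell Ω p ωp i, h x := by
          rw [Finset.sum_congr rfl fun i _ => (step3 i).symm]
      _ = ∑ i, ∫ x in lagCell Ω q ωq i, h x := step2.symm
      _ ≤ ∑ i, ∫ x in lagCell Ω q ωq i, g i x := Finset.sum_le_sum fun i _ => step1 i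
  have lhs := fun i => key p ωp i (hmp i)
  have rhs := fun i => key q ωq i (hmq i)
  simp only [lhs, rhs] at chain
  simp only [Finset.sum_sub_distrib] at chain
  linarith

lemma setIntegral_norm_sub_sq {A : Set E3} (hA : MeasurableSet A)
    (hb : IsBounded A) (hfin : volume A ≠ ⊤) (ζ : E3) :
    ∫ x in A, ‖x - ζ‖ ^ 2
      = (∫ x in A, ‖x‖ ^ 2) - 2 * ⟪ζ, ∫ x in A, x⟫ + (volume A).toReal * ‖ζ‖ ^ 2 := by
  obtain ⟨r, hr⟩ := hb.subset_closedBall 0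
  have hi : ∀ (f : E3 → ℝ), Continuous f → IntegrableOn f A volume := fun f hf =>
    (hf.continuousOn.integrableOn_compact (isCompact_closedBall (0:E3) r)).mono_set hr
  have hiv : IntegrableOn (fun x : E3 => x) A volume :=
    (continuous_id.continuousOn.integrableOn_compact (isCompact_closedBall (0:E3) r)).mono_set hr
  have hpt : ∀ x : E3, ‖x - ζ‖ ^ 2 = ‖x‖ ^ 2 - ⟪ζ, x⟫ * 2 + ‖ζ‖ ^ 2 := by
    intro x
    rw [norm_sub_sq_real]
    rw [real_inner_comm]
    ring
  calc ∫ x in A, ‖x - ζ‖ ^ 2 = ∫ x in A, (‖x‖ ^ 2 - ⟪ζ, x⟫ * 2 + ‖ζ‖ ^ 2) := by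
        exact setIntegral_congr_fun hA fun x _ => hpt x
    _ = (∫ x in A, ‖x‖ ^ 2) - (∫ x in A, ⟪ζ, x⟫) * 2 + (volume A).toReal * ‖ζ‖ ^ 2 := by
        rw [integral_add, integral_sub, integral_mul_const, setIntegral_const, smul_eq_mul, measureReal_def]
        · exact hi _ (by fun_prop)
        · exact (hi _ (continuous_const.inner continuous_id)).mul_const 2
        · exact ((hi _ (by fun_prop)).sub
            ((hi _ (continuous_const.inner continuous_id)).mul_const 2))
        · exact integrableOn_const (C := ‖ζ‖ ^ 2) hfin
    _ = (∫ x in A, ‖x‖ ^ 2) - 2 * ⟪ζ, ∫ x in A, x⟫ + (volume A).toReal * ‖ζ‖ ^ 2 := by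
        have hcomm : ∫ x in A, ⟪ζ, x⟫ = ⟪ζ, ∫ x in A, x⟫ := by
          have := ContinuousLinearMap.integral_comp_comm (innerSL ℝ ζ) hiv
          simpa only [innerSL_apply_apply] using this
        rw [hcomm]; ring

lemma anti_of_dominated {f : ℝ → ℝ} {a b : ℝ} (hab : a ≤ b) (hf : ContinuousOn f (Icc a b))
    (H : ∀ x ∈ Ico a b, ∃ φ : ℝ → ℝ, HasDerivWithinAt φ 0 (Icc a b) x ∧
        ∀ s ∈ Ioc x b, f s - f x ≤ φ s - φ x) : f b ≤ f a := by
  have := image_le_of_liminf_slope_right_le_deriv_boundary (B := fun _ => f a) (B' := fun _ => 0)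
    hf le_rfl continuousOn_const (fun x _ => hasDerivWithinAt_const x _ _) ?_ (right_mem_Icc.2 hab)
  · exact this
  intro x hx r hr
  obtain ⟨φ, hφ, hle⟩ := H x hx
  have hsub : Ioc x b ⊆ Icc a b \ {x} := fun s hs =>
    ⟨⟨hx.1.trans hs.1.le, hs.2⟩, ne_of_gt hs.1⟩
  have htend : Tendsto (slope φ x) (𝓝[Ioc x b] x) (𝓝 0) :=
    (hasDerivWithinAt_iff_tendsto_slope.1 hφ).mono_left (nhdsWithin_mono _ hsub)
  have hev : ∀ᶠ s in 𝓝[Ioc x b] x, slope f x s < r := by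
    filter_upwards [htend (Iio_mem_nhds hr), self_mem_nhdsWithin] with s hs1 hs2
    have hxs : 0 < s - x := sub_pos.2 hs2.1
    have hsl : slope f x s ≤ slope φ x s := by
      rw [slope_def_field, slope_def_field]
      exact (div_le_div_iff_of_pos_right hxs).2 (hle s hs2)
    exact lt_of_le_of_lt hsl hs1
  have : NeBot (𝓝[Ioc x b] x) := left_nhdsWithin_Ioc_neBot hx.2
  exact (hev.frequently).filter_mono (nhdsWithin_mono _ Ioc_subset_Ioi_self)

lemma J_apply_two (u : E3) : (J u) 2 = 0 := by
  simp [J, matJ, Matrix.toEuclideanLin, Matrix.mulVec, dotProduct, Fin.sum_univ_three]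

lemma J_inner_self (u : E3) : ⟪J u, u⟫ = 0 := by
  simp [J, matJ, Matrix.toEuclideanLin, Matrix.mulVec, dotProduct, Fin.sum_univ_three,
    PiLp.inner_apply, Matrix.vecHead, Matrix.vecTail]
  ring

lemma term_deriv (mi : ℝ) (hmi : mi ≠ 0) (b : E3) (u : ℝ → E3) (s : Set ℝ) (t : ℝ)
    (hu : HasDerivWithinAt u (J (u t - mi⁻¹ • b)) s t) :
    HasDerivWithinAt (fun r => mi / 2 * ‖u r‖ ^ 2 - ⟪u r, b⟫ - mi / 2 * (u r 2) ^ 2) 0 s t := by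
  set v : E3 := J (u t - mi⁻¹ • b) with hv
  have h1 : HasDerivWithinAt (fun r => mi / 2 * ‖u r‖ ^ 2)
      (mi / 2 * (⟪u t, v⟫ + ⟪v, u t⟫)) s t := by
    have : (fun r => mi / 2 * ‖u r‖ ^ 2) = fun r => mi / 2 * ⟪u r, u r⟫ := by
      funext r; rw [real_inner_self_eq_norm_sq]
    rw [this]
    exact (hu.inner ℝ hu).const_mul _
  have h2 : HasDerivWithinAt (fun r => ⟪u r, b⟫) (⟪u t, (0:E3)⟫ + ⟪v, b⟫) s t :=
    hu.inner ℝ (hasDerivWithinAt_const t s b)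
  have hc : HasDerivWithinAt (fun r => u r 2) (v 2) s t := by
    have := (EuclideanSpace.proj (2 : Fin 3)).hasFDerivAt.comp_hasDerivWithinAt t hu
    simp at this
    exact this
  have h3 : HasDerivWithinAt (fun r => mi / 2 * (u r 2) ^ 2)
      (mi / 2 * (2 * (u t 2) ^ 1 * (v 2))) s t := (hc.pow 2).const_mul _
  have htot := (h1.sub h2).sub h3
  convert htot using 1
  · rfl
  · rfl
  · rfl
  have hv2 : v 2 = 0 := J_apply_two _
  rw [hv2]
  have hJ : ⟪v, u t - mi⁻¹ • b⟫ = 0 := J_inner_self _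
  rw [inner_sub_right, real_inner_smul_right] at hJ
  have hcomm : ⟪u t, v⟫ = ⟪v, u t⟫ := real_inner_comm _ _
  have hz : ⟪u t, (0:E3)⟫ = 0 := inner_zero_right _
  rw [hz, hcomm]
  have : ⟪v, b⟫ = mi * ⟪v, u t⟫ := by
    field_simp at hJ ⊢
    linarith
  rw [this]
  ring

end Aux

/-- **Conservation of the geostrophic energy along solutions of the seed ODE**
(Lemma 4.12 of Bourne, Egan, Pelloni, Wilkinson). -/
theorem seed_ode_energy_conservation
    (Ω : Set E3) (hΩo : IsOpen Ω) (hΩb : Bornology.IsBounded Ω) (hΩc : Convex ℝ Ω)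
    (hΩv : volume Ω = 1)
    {N : ℕ} (m : Fin N → ℝ) (hm : ∀ i, 0 < m i) (hm1 : ∑ i, m i = 1)
    (T : ℝ) (hT : 0 < T) (z : ℝ → Fin N → E3) (hsol : SeedODESol Ω m T z)
    (w : ℝ → Fin N → ℝ)
    (hw : ∀ t ∈ Icc (0:ℝ) T, ∀ j, volume (lagCell Ω (z t) (w t) j) = ENNReal.ofReal (m j)) :
    ∃ c : ℝ, ∀ t ∈ Icc (0:ℝ) T,
      (1/2) * (∑ i, ∫ x in lagCell Ω (z t) (w t) i, ‖x - z t i‖ ^ 2)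
        - (1/2) * (∑ i, m i * ((z t i) 2) ^ 2)
        - (1/2) * (∫ x in Ω, ((x : E3) 2) ^ 2) = c := by
  classical
  haveI hNE : Nonempty (Fin N) := by
    rcases Nat.eq_zero_or_pos N with h | h
    · exfalso; subst h; simp at hm1
    · exact ⟨⟨0, h⟩⟩
  have hΩm : MeasurableSet Ω := hΩo.measurableSet
  obtain ⟨R, hR⟩ := hΩb.subset_closedBall 0
  have hdist : ∀ t ∈ Icc (0:ℝ) T, ∀ i j : Fin N, i ≠ j → z t i ≠ z t j :=
    fun t ht => (hsol.2 t ht).1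
  choose! W hW1 hW2 using fun t ht => (hsol.2 t ht).2
  -- abbreviations
  set cell : ℝ → Fin N → Set E3 := fun t i => lagCell Ω (z t) (W t) i with hcell
  set bb : ℝ → Fin N → E3 := fun t i => ∫ x in cell t i, (x : E3) with hbb
  set En : ℝ → ℝ := fun t => (1/2) * (∑ i, ∫ x in cell t i, ‖x - z t i‖ ^ 2)
      - (1/2) * (∑ i, m i * ((z t i) 2) ^ 2)
      - (1/2) * (∫ x in Ω, ((x : E3) 2) ^ 2) with hEn
  set φf : ℝ → ℝ → ℝ := fun t s =>
      ∑ i, (m i / 2 * ‖z s i‖ ^ 2 - ⟪z s i, bb t i⟫ - m i / 2 * ((z s i) 2) ^ 2) with hφf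
  -- basic cell facts
  have hcellb : ∀ t i, Bornology.IsBounded (cell t i) :=
    fun t i => hΩb.subset (lagCell_subset _ _ _ _)
  have hcellm : ∀ t i, MeasurableSet (cell t i) := fun t i => lagCell_measurable hΩm _ _ _
  have hcellfin : ∀ t ∈ Icc (0:ℝ) T, ∀ i, volume (cell t i) ≠ ⊤ := by
    intro t ht i; rw [hW1 t ht i]; exact ENNReal.ofReal_ne_top
  -- expansion of second moments
  have hexp : ∀ t ∈ Icc (0:ℝ) T, ∀ (i : Fin N) (ζ : E3),
      ∫ x in cell t i, ‖x - ζ‖ ^ 2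
        = (∫ x in cell t i, ‖x‖ ^ 2) - 2 * ⟪ζ, bb t i⟫ + m i * ‖ζ‖ ^ 2 := by
    intro t ht i ζ
    rw [setIntegral_norm_sub_sq (hcellm t i) (hcellb t i) (hcellfin t ht i) ζ,
      hW1 t ht i, ENNReal.toReal_ofReal (hm i).le]
  -- the key one-sided inequality
  have hkey : ∀ s ∈ Icc (0:ℝ) T, ∀ t ∈ Icc (0:ℝ) T, En s - En t ≤ φf t s - φf t t := by
    intro s hs t ht
    have A : ∑ i, ∫ x in cell s i, ‖x - z s i‖ ^ 2
        ≤ ∑ i, ∫ x in cell t i, ‖x - z s i‖ ^ 2 :=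
      opt_ineq hΩm hΩb (hdist s hs) (hdist t ht) (W s) (W t)
        (fun i => (hm i).le) (hW1 s hs) (hW1 t ht)
    rw [Finset.sum_congr rfl fun i _ => hexp t ht i (z s i)] at A
    have hFs : ∑ i, ∫ x in cell s i, ‖x - z s i‖ ^ 2
        = ∑ i, ((∫ x in cell s i, ‖x‖ ^ 2) - 2 * ⟪z s i, bb s i⟫ + m i * ‖z s i‖ ^ 2) :=
      Finset.sum_congr rfl fun i _ => hexp s hs i (z s i)
    have hFt : ∑ i, ∫ x in cell t i, ‖x - z t i‖ ^ 2
        = ∑ i, ((∫ x in cell t i, ‖x‖ ^ 2) - 2 * ⟪z t i, bb t i⟫ + m i * ‖z t i‖ ^ 2) :=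
      Finset.sum_congr rfl fun i _ => hexp t ht i (z t i)
    have hid : En s - En t - (φf t s - φf t t)
        = (1/2) * ((∑ i, ∫ x in cell s i, ‖x - z s i‖ ^ 2)
          - ∑ i, ((∫ x in cell t i, ‖x‖ ^ 2) - 2 * ⟪z s i, bb t i⟫ + m i * ‖z s i‖ ^ 2)) := by
      simp only [hEn, hφf]
      rw [hFs, hFt]
      simp only [Finset.sum_add_distrib, Finset.sum_sub_distrib, div_mul_eq_mul_div,
        ← Finset.sum_div, ← Finset.mul_sum]
      ring
    have A' : (∑ i, ∫ x in cell s i, ‖x - z s i‖ ^ 2)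
        - (∑ i, ((∫ x in cell t i, ‖x‖ ^ 2) - 2 * ⟪z s i, bb t i⟫ + m i * ‖z s i‖ ^ 2)) ≤ 0 := by
      linarith [A]
    have h3 : En s - En t - (φf t s - φf t t) ≤ 0 := by
      rw [hid]; linarith [A']
    linarith [h3]
  -- norm bound on first moments
  have hbnorm : ∀ t ∈ Icc (0:ℝ) T, ∀ i, ‖bb t i‖ ≤ R * m i := by
    intro t ht i
    have h1 : ‖bb t i‖ ≤ R * (volume (cell t i)).toReal := by
      simp only [hbb]
      refine norm_setIntegral_le_of_norm_le_const (f := fun x : E3 => x) ?_ ?_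
      · rw [hW1 t ht i]; exact ENNReal.ofReal_lt_top
      · intro x hx
        have : x ∈ Metric.closedBall (0:E3) R := hR (lagCell_subset _ _ _ _ hx)
        simpa [Metric.mem_closedBall, dist_eq_norm] using this
    rwa [hW1 t ht i, ENNReal.toReal_ofReal (hm i).le] at h1
  -- modulus of continuity
  set P : ℝ → ℝ → ℝ := fun s t => ∑ i, (m i / 2 * |‖z s i‖ ^ 2 - ‖z t i‖ ^ 2|
      + R * m i * ‖z s i - z t i‖ + m i / 2 * |((z s i) 2) ^ 2 - ((z t i) 2) ^ 2|) with hP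
  have hφb : ∀ r ∈ Icc (0:ℝ) T, ∀ s t : ℝ, φf r s - φf r t ≤ P s t := by
    intro r hr s t
    rw [hφf, hP, ← Finset.sum_sub_distrib]
    refine Finset.sum_le_sum fun i _ => ?_
    have hb := hbnorm r hr i
    have h5 : |⟪z s i - z t i, bb r i⟫| ≤ ‖z s i - z t i‖ * (R * m i) :=
      (abs_real_inner_le_norm _ _).trans
        (mul_le_mul_of_nonneg_left hb (norm_nonneg _))
    have h6 : ⟪z s i - z t i, bb r i⟫ = ⟪z s i, bb r i⟫ - ⟪z t i, bb r i⟫ :=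
      inner_sub_left _ _ _
    have h7 : ‖z s i‖ ^ 2 - ‖z t i‖ ^ 2 ≤ |‖z s i‖ ^ 2 - ‖z t i‖ ^ 2| := le_abs_self _
    have h8' : -(((z s i) 2) ^ 2 - ((z t i) 2) ^ 2) ≤ |((z s i) 2) ^ 2 - ((z t i) 2) ^ 2| := by
      rw [← abs_neg]; exact le_abs_self _
    have h9 : -⟪z s i - z t i, bb r i⟫ ≤ ‖z s i - z t i‖ * (R * m i) := by
      have := neg_abs_le ⟪z s i - z t i, bb r i⟫
      linarith [this, h5, neg_le_abs ⟪z s i - z t i, bb r i⟫]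
    have hmi := (hm i).le
    nlinarith [mul_le_mul_of_nonneg_left h7 (by positivity : (0:ℝ) ≤ m i / 2),
      mul_le_mul_of_nonneg_left h8' (by positivity : (0:ℝ) ≤ m i / 2), h9, h6]
  have hPsymm : ∀ s t : ℝ, P s t = P t s := by
    intro s t
    rw [hP]
    refine Finset.sum_congr rfl fun i _ => ?_
    rw [abs_sub_comm, norm_sub_rev, abs_sub_comm (((z s i) 2)^2)]
  have hEbound : ∀ s ∈ Icc (0:ℝ) T, ∀ t ∈ Icc (0:ℝ) T, |En s - En t| ≤ P s t := by
    intro s hs t ht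
    rw [abs_sub_le_iff]
    constructor
    · exact (hkey s hs t ht).trans (hφb t ht s t)
    · exact (hkey t ht s hs).trans ((hφb s hs t s).trans (by rw [hPsymm]))
  -- continuity of z components
  have hzc : ∀ i, ContinuousOn (fun s => z s i) (Icc 0 T) :=
    fun i t ht => (hW2 t ht i).continuousWithinAt
  -- continuity of the modulus
  have hPc : ∀ t : ℝ, ContinuousOn (fun s => P s t) (Icc 0 T) := by
    intro t
    rw [hP]
    refine continuousOn_finset_sum _ fun i _ => ?_
    have h1 : ContinuousOn (fun s => ‖z s i‖ ^ 2) (Icc 0 T) := ((hzc i).norm.pow 2)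
    have h2 : ContinuousOn (fun s => z s i - z t i) (Icc 0 T) := (hzc i).sub continuousOn_const
    have h3 : ContinuousOn (fun s => (z s i) 2) (Icc 0 T) :=
      (EuclideanSpace.proj (2 : Fin 3)).continuous.comp_continuousOn (hzc i)
    exact (((h1.sub continuousOn_const).abs.const_smul (m i / 2)).add
        (h2.norm.const_smul (R * m i))).add
      (((h3.pow 2).sub continuousOn_const).abs.const_smul (m i / 2))
  have hP0 : ∀ t : ℝ, P t t = 0 := by
    intro t
    rw [hP]
    refine Finset.sum_eq_zero fun i _ => by simp
  -- continuity of the energy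
  have hEcont : ContinuousOn En (Icc 0 T) := by
    intro t ht
    have htend : Tendsto (fun s => P s t) (𝓝[Icc 0 T] t) (𝓝 0) := by
      have := (hPc t t ht).tendsto
      rwa [hP0 t] at this
    have h1 : Tendsto (fun s => En s - En t) (𝓝[Icc 0 T] t) (𝓝 0) := by
      refine squeeze_zero_norm' ?_ htend
      filter_upwards [self_mem_nhdsWithin] with s hs
      rw [Real.norm_eq_abs]
      exact hEbound s hs t ht
    have h2 := h1.add
      (tendsto_const_nhds : Tendsto (fun _ : ℝ => En t) (𝓝[Icc 0 T] t) (𝓝 (En t)))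
    rw [zero_add] at h2
    have : (fun s => En s - En t + En t) = En := by funext s; ring
    rwa [this] at h2
  -- derivative of the comparison function
  have hφderiv : ∀ t ∈ Icc (0:ℝ) T, HasDerivWithinAt (φf t) 0 (Icc 0 T) t := by
    intro t ht
    have h := HasDerivWithinAt.sum (u := (Finset.univ : Finset (Fin N)))
      (A := fun i s => m i / 2 * ‖z s i‖ ^ 2 - ⟪z s i, bb t i⟫ - m i / 2 * ((z s i) 2) ^ 2)
      (A' := fun _ => (0:ℝ)) (s := Icc (0:ℝ) T) (x := t)
      (fun i _ => term_deriv (m i) (hm i).ne' (bb t i) (fun s => z s i) _ t (hW2 t ht i))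
    simp only [hφf]
    convert h using 1
    · rfl
    · rfl
    · funext s; simp [Finset.sum_apply]
    simp
  -- monotonicity in both directions
  have mono1 : ∀ a b : ℝ, 0 ≤ a → a ≤ b → b ≤ T → En b ≤ En a := by
    intro a b ha hab hbT
    have hsub : Icc a b ⊆ Icc 0 T := Icc_subset_Icc ha hbT
    refine anti_of_dominated hab (hEcont.mono hsub) ?_
    intro x hx
    have hxI : x ∈ Icc (0:ℝ) T := ⟨ha.trans hx.1, hx.2.le.trans hbT⟩
    refine ⟨φf x, (hφderiv x hxI).mono hsub, ?_⟩
    intro s hs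
    have hsI : s ∈ Icc (0:ℝ) T := ⟨ha.trans (hx.1.trans hs.1.le), hs.2.trans hbT⟩
    exact hkey s hsI x hxI
  have mono2 : ∀ a b : ℝ, 0 ≤ a → a ≤ b → b ≤ T → En a ≤ En b := by
    intro a b ha hab hbT
    have hsub : Icc a b ⊆ Icc 0 T := Icc_subset_Icc ha hbT
    have hmap : MapsTo (fun u => a + b - u) (Icc a b) (Icc a b) := by
      intro u hu
      constructor <;> simp only [mem_Icc] at hu ⊢ <;> linarith [hu.1, hu.2]
    have hrev : ∀ u ∈ Icc a b, a + b - u ∈ Icc (0:ℝ) T := fun u hu => hsub (hmap hu)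
    have h := anti_of_dominated (f := fun u => En (a + b - u)) hab ?_ ?_
    · simpa using h
    · exact (hEcont.mono hsub).comp
        (Continuous.continuousOn (by fun_prop)) hmap
    · intro x hx
      have hxab : x ∈ Icc a b := ⟨hx.1, hx.2.le⟩
      have hτ : a + b - x ∈ Icc (0:ℝ) T := hrev x hxab
      refine ⟨fun u => φf (a + b - x) (a + b - u), ?_, ?_⟩
      · have hin : HasDerivWithinAt (fun u : ℝ => a + b - u) (-1) (Icc a b) x := by
          simpa using ((hasDerivWithinAt_id x (Icc a b)).const_sub (a + b))
        have hout := hφderiv (a + b - x) hτ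
        have := hout.comp x hin (fun u hu => hrev u hu)
        simp at this
        exact this
      · intro s hs
        have hsab : s ∈ Icc a b := ⟨hx.1.trans hs.1.le, hs.2⟩
        exact hkey (a + b - s) (hrev s hsab) (a + b - x) hτ
  -- the energy is constant
  have hconst : ∀ t ∈ Icc (0:ℝ) T, En t = En 0 := by
    intro t ht
    exact le_antisymm (mono1 0 t le_rfl ht.1 ht.2) (mono2 0 t le_rfl ht.1 ht.2)
  -- reconcile the given weights with the chosen ones
  refine ⟨En 0, ?_⟩
  intro t ht
  have hcells : ∑ i, ∫ x in lagCell Ω (z t) (w t) i, ‖x - z t i‖ ^ 2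
      = ∑ i, ∫ x in cell t i, ‖x - z t i‖ ^ 2 := by
    refine le_antisymm ?_ ?_
    · exact opt_ineq hΩm hΩb (hdist t ht) (hdist t ht) (w t) (W t)
        (fun i => (hm i).le) (hw t ht) (hW1 t ht)
    · exact opt_ineq hΩm hΩb (hdist t ht) (hdist t ht) (W t) (w t)
        (fun i => (hm i).le) (hW1 t ht) (hw t ht)
  rw [hcells]
  exact hconst t ht
end
end

section
/- Let m ∈ (0,½], r > 0, set q = r/(1−m), let z̄_1, z̄_2 ∈ ℝ³ be distinct, let ω = 1 − q/|z̄_1 − z̄_2| (so ω ≠ 1), and let ν = (z̄_1 − z̄_2)/|z̄_1 − z̄_2|. Define z_1, z_2 : [0,∞) → ℝ³ by z_1(t) = e^{tJ} z̄_1 − (r/(ω−1)) (e^{ωtJ} − e^{tJ}) ν and z_2(t) = e^{tJ} z̄_2 + (mr/((1−m)(ω−1))) (e^{ωtJ} − e^{tJ}) ν. Then for all t ≥ 0: z_1(t) − z_2(t) = e^{ωtJ}(z̄_1 − z̄_2), in particular |z_1(t) − z_2(t)| = |z̄_1 − z̄_2| ≠ 0, and the pair (z_1, z_2) is a continuously differentiable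 solution of the system ż_1 = J(z_1 − r (z_1 − z_2)/|z_1 − z_2|), ż_2 = J(z_2 − (mr/(m−1)) (z_1 − z_2)/|z_1 − z_2|), with z_1(0) = z̄_1 and z_2(0) = z̄_2. -/
open MeasureTheory Set Filter
open scoped ENNReal Topology RealInnerProductSpace

noncomputable section

lemma J_apply (x : E3) (i : Fin 3) : J x i = (matJ.mulVec (WithLp.equiv 2 (Fin 3 → ℝ) x)) i := rfl

lemma inner_J (x y : E3) : ⟪J x, y⟫ = -⟪x, J y⟫ := by
  simp [PiLp.inner_apply, Fin.sum_univ_three, J_apply, matJ, Matrix.mulVec, dotProduct, Matrix.vecHead, Matrix.vecTail,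
    Fin.sum_univ_three]

lemma star_J : star J = -J := by
  rw [ContinuousLinearMap.star_eq_adjoint]
  symm
  rw [ContinuousLinearMap.eq_adjoint_iff]
  intro x y
  simp [inner_J x y]

lemma exp_unitary (s : ℝ) :
    star (NormedSpace.exp (s • J)) * NormedSpace.exp (s • J) = 1 := by
  rw [NormedSpace.star_exp]
  have h : star (s • J) = -(s • J) := by
    rw [star_smul, star_J]; simp
  rw [h, ← NormedSpace.exp_add_of_commute_of_mem_ball (𝕂 := ℝ) (Commute.refl (s • J)).neg_left
    (by simp [NormedSpace.expSeries_radius_eq_top]) (by simp [NormedSpace.expSeries_radius_eq_top])]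
  simp [NormedSpace.exp_zero]

lemma exp_norm_eq (s : ℝ) (v : E3) : ‖NormedSpace.exp (s • J) v‖ = ‖v‖ := by
  have h : ⟪NormedSpace.exp (s • J) v, NormedSpace.exp (s • J) v⟫ = ⟪v, v⟫ := by
    rw [← ContinuousLinearMap.adjoint_inner_left, ← ContinuousLinearMap.star_eq_adjoint,
      ← ContinuousLinearMap.mul_apply, exp_unitary, ContinuousLinearMap.one_apply]
  have h2 := h
  rw [real_inner_self_eq_norm_sq, real_inner_self_eq_norm_sq] at h2
  nlinarith [norm_nonneg (NormedSpace.exp (s • J) v), norm_nonneg v]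

lemma expJ_deriv (c t : ℝ) :
    HasDerivAt (fun u : ℝ => NormedSpace.exp ((c * u) • J))
      (c • (J * NormedSpace.exp ((c * t) • J))) t := by
  have hg := hasDerivAt_exp_smul_const' (𝕂 := ℝ) (x := J) (c * t)
  have hh : HasDerivAt (fun u : ℝ => c * u) c t := by
    simpa using (hasDerivAt_id t).const_mul c
  have := HasDerivAt.scomp t hg hh
  simpa [Function.comp_def] using this

lemma expJ_apply_deriv (c t : ℝ) (x : E3) :
    HasDerivAt (fun u : ℝ => NormedSpace.exp ((c * u) • J) x)
      (c • J (NormedSpace.exp ((c * t) • J) x)) t := by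
  have := (expJ_deriv c t).clm_apply (hasDerivAt_const t x)
  simpa [ContinuousLinearMap.mul_apply] using this

lemma expJ_apply_deriv_one (t : ℝ) (x : E3) :
    HasDerivAt (fun u : ℝ => NormedSpace.exp (u • J) x)
      (J (NormedSpace.exp (t • J) x)) t := by
  have := expJ_apply_deriv 1 t x
  simpa [one_mul] using this

lemma expJ_contDiff (c : ℝ) (x : E3) :
    ContDiff ℝ 1 (fun u : ℝ => NormedSpace.exp ((c * u) • J) x) := by
  have hexp : ContDiff ℝ 1 (NormedSpace.exp : (E3 →L[ℝ] E3) → (E3 →L[ℝ] E3)) :=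
    contDiff_iff_contDiffAt.2 fun y => (NormedSpace.exp_analytic y).contDiffAt
  have h1 : ContDiff ℝ 1 (fun u : ℝ => (c * u) • J) :=
    (contDiff_const.mul contDiff_id).smul contDiff_const
  exact (hexp.comp h1).clm_apply contDiff_const

lemma vec_id1 (a P U : E3) (c rr w : ℝ) (h : c * w = c + rr) :
    a - c • (P - U) - rr • P = a - c • (w • P - U) := by
  have h2 : c • (w • P) = (c + rr) • P := by rw [smul_smul, h]
  rw [smul_sub, smul_sub, h2, add_smul]
  abel

lemma vec_id2 (a P U : E3) (c s w : ℝ) (h : c * w = c - s) :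
    a + c • (P - U) - s • P = a + c • (w • P - U) := by
  have h2 : c • (w • P) = (c - s) • P := by rw [smul_smul, h]
  rw [smul_sub, smul_sub, h2, sub_smul]
  abel

set_option maxHeartbeats 1000000 in
/-- **Explicit two-mass solution of the seed ODE** (Example 6.2 of Bourne, Egan, Pelloni,
Wilkinson). With `q = r/(1-m)`, `ω = 1 - q/|z̄₁ - z̄₂|` and `ν = (z̄₁ - z̄₂)/|z̄₁ - z̄₂|`,
the explicit formulas obtained from Duhamel's formula solve the two-seed ODE system, and
the difference of the seeds rotates with angular frequency `ω`. -/
theorem two_mass_explicit_solution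
    (m r : ℝ) (hm : 0 < m) (hm2 : m ≤ 1/2) (hr : 0 < r)
    (zbar1 zbar2 : E3) (hzz : zbar1 ≠ zbar2)
    (q ω : ℝ) (hq : q = r / (1 - m)) (hω : ω = 1 - q / ‖zbar1 - zbar2‖)
    (ν : E3) (hν : ν = ‖zbar1 - zbar2‖⁻¹ • (zbar1 - zbar2))
    (z1 z2 : ℝ → E3)
    (hz1 : ∀ t, z1 t = NormedSpace.exp (t • J) zbar1
      - (r / (ω - 1)) • ((NormedSpace.exp ((ω * t) • J) - NormedSpace.exp (t • J)) ν))
    (hz2 : ∀ t, z2 t = NormedSpace.exp (t • J) zbar2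
      + (m * r / ((1 - m) * (ω - 1))) •
          ((NormedSpace.exp ((ω * t) • J) - NormedSpace.exp (t • J)) ν)) :
    ω ≠ 1 ∧
    ContDiff ℝ 1 z1 ∧ ContDiff ℝ 1 z2 ∧
    z1 0 = zbar1 ∧ z2 0 = zbar2 ∧
    ∀ t : ℝ, 0 ≤ t →
      z1 t - z2 t = NormedSpace.exp ((ω * t) • J) (zbar1 - zbar2) ∧
      ‖z1 t - z2 t‖ = ‖zbar1 - zbar2‖ ∧
      z1 t ≠ z2 t ∧
      HasDerivAt z1 (J (z1 t - (r / ‖z1 t - z2 t‖) • (z1 t - z2 t))) t ∧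
      HasDerivAt z2 (J (z2 t - (m * r / (m - 1) / ‖z1 t - z2 t‖) • (z1 t - z2 t))) t := by
  have hndpos : 0 < ‖zbar1 - zbar2‖ := by
    rw [norm_pos_iff, sub_ne_zero]; exact hzz
  have hnd : ‖zbar1 - zbar2‖ ≠ 0 := ne_of_gt hndpos
  have hm1 : (1:ℝ) - m ≠ 0 := by nlinarith
  have hm1' : m - 1 ≠ 0 := by nlinarith
  have hq0 : 0 < q := by
    rw [hq]; exact div_pos hr (by nlinarith)
  have hω1 : ω - 1 ≠ 0 := by
    have h1 : 0 < q / ‖zbar1 - zbar2‖ := div_pos hq0 hndpos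
    rw [hω]; intro hcon
    nlinarith
  have hωne : ω ≠ 1 := fun h => hω1 (by rw [h]; ring)
  set c1 : ℝ := r / (ω - 1) with hc1
  set c2 : ℝ := m * r / ((1 - m) * (ω - 1)) with hc2
  have hνd : ‖zbar1 - zbar2‖ • ν = zbar1 - zbar2 := by
    rw [hν, smul_smul, mul_inv_cancel₀ hnd, one_smul]
  have hsum : c1 + c2 = -‖zbar1 - zbar2‖ := by
    rw [hc1, hc2, hω, hq]
    field_simp [hr.ne']
    ring
  have hs1 : c1 * ω = c1 + r := by
    rw [hc1]; field_simp; ring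
  have hs2 : c2 * ω = c2 - m * r / (m - 1) := by
    rw [hc2]; field_simp; ring
  -- the difference rotates
  have hkey : ∀ t : ℝ, z1 t - z2 t
      = NormedSpace.exp ((ω * t) • J) (zbar1 - zbar2) := by
    intro t
    have expand : z1 t - z2 t = NormedSpace.exp (t • J) (zbar1 - zbar2)
        - (c1 + c2) • ((NormedSpace.exp ((ω * t) • J) - NormedSpace.exp (t • J)) ν) := by
      rw [hz1 t, hz2 t, map_sub]
      module
    rw [expand, hsum, ContinuousLinearMap.sub_apply, neg_smul, smul_sub,
      ← ContinuousLinearMap.map_smul, ← ContinuousLinearMap.map_smul, hνd]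
    abel
  have hnorm : ∀ t : ℝ, ‖z1 t - z2 t‖ = ‖zbar1 - zbar2‖ := by
    intro t; rw [hkey t]; exact exp_norm_eq _ _
  -- smoothness
  have hz1fun : z1 = fun t : ℝ => NormedSpace.exp (t • J) zbar1
      - c1 • (NormedSpace.exp ((ω * t) • J) ν - NormedSpace.exp (t • J) ν) := by
    funext t; rw [hz1 t, ContinuousLinearMap.sub_apply]
  have hz2fun : z2 = fun t : ℝ => NormedSpace.exp (t • J) zbar2
      + c2 • (NormedSpace.exp ((ω * t) • J) ν - NormedSpace.exp (t • J) ν) := by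
    funext t; rw [hz2 t, ContinuousLinearMap.sub_apply]
  have hA1 : ∀ x : E3, ContDiff ℝ 1 (fun u : ℝ => NormedSpace.exp (u • J) x) := by
    intro x; simpa [one_mul] using expJ_contDiff 1 x
  have hcd1 : ContDiff ℝ 1 z1 := by
    rw [hz1fun]
    exact (hA1 zbar1).sub (((expJ_contDiff ω ν).sub (hA1 ν)).const_smul c1)
  have hcd2 : ContDiff ℝ 1 z2 := by
    rw [hz2fun]
    exact (hA1 zbar2).add (((expJ_contDiff ω ν).sub (hA1 ν)).const_smul c2)
  have hz10 : z1 0 = zbar1 := by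
    rw [hz1 0, mul_zero, zero_smul ℝ J, NormedSpace.exp_zero]; simp
  have hz20 : z2 0 = zbar2 := by
    rw [hz2 0, mul_zero, zero_smul ℝ J, NormedSpace.exp_zero]; simp
  refine ⟨hωne, hcd1, hcd2, hz10, hz20, fun t _ => ?_⟩
  have hnormt := hnorm t
  have hne : z1 t ≠ z2 t := by
    intro h
    rw [h, sub_self, norm_zero] at hnormt
    exact hnd hnormt.symm
  have h11 := expJ_apply_deriv_one t zbar1
  have h21 := expJ_apply_deriv_one t zbar2
  have h12 := expJ_apply_deriv ω t ν
  have h13 := expJ_apply_deriv_one t ν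
  have hBd : ∀ s : ℝ, (s / ‖zbar1 - zbar2‖) • NormedSpace.exp ((ω * t) • J) (zbar1 - zbar2)
      = s • NormedSpace.exp ((ω * t) • J) ν := by
    intro s
    have hb : NormedSpace.exp ((ω * t) • J) (zbar1 - zbar2)
        = ‖zbar1 - zbar2‖ • NormedSpace.exp ((ω * t) • J) ν := by
      rw [← ContinuousLinearMap.map_smul, hνd]
    rw [hb, smul_smul, div_mul_cancel₀ s hnd]
  have hz1d : HasDerivAt z1 (J (NormedSpace.exp (t • J) zbar1)
      - c1 • (ω • J (NormedSpace.exp ((ω * t) • J) ν)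
        - J (NormedSpace.exp (t • J) ν))) t := by
    have hF := h11.sub ((h12.sub h13).const_smul c1)
    exact hF.congr_of_eventuallyEq (Filter.Eventually.of_forall fun u => by
      rw [hz1 u, ContinuousLinearMap.sub_apply]; rfl)
  have hz2d : HasDerivAt z2 (J (NormedSpace.exp (t • J) zbar2)
      + c2 • (ω • J (NormedSpace.exp ((ω * t) • J) ν)
        - J (NormedSpace.exp (t • J) ν))) t := by
    have hF := h21.add ((h12.sub h13).const_smul c2)
    exact hF.congr_of_eventuallyEq (Filter.Eventually.of_forall fun u => by
      rw [hz2 u, ContinuousLinearMap.sub_apply]; rfl)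
  refine ⟨hkey t, hnormt, hne, ?_, ?_⟩
  · rw [hnormt, hkey t, hz1 t, hBd r]
    have hv : J (NormedSpace.exp (t • J) zbar1
        - c1 • ((NormedSpace.exp ((ω * t) • J) - NormedSpace.exp (t • J)) ν)
        - r • NormedSpace.exp ((ω * t) • J) ν)
        = J (NormedSpace.exp (t • J) zbar1)
          - c1 • (ω • J (NormedSpace.exp ((ω * t) • J) ν)
            - J (NormedSpace.exp (t • J) ν)) := by
      simp only [ContinuousLinearMap.sub_apply, map_sub, _root_.map_smul]
      exact vec_id1 _ _ _ _ _ _ hs1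
    rw [hv]
    exact hz1d
  · rw [hnormt, hkey t, hz2 t, hBd (m * r / (m - 1))]
    have hv : J (NormedSpace.exp (t • J) zbar2
        + c2 • ((NormedSpace.exp ((ω * t) • J) - NormedSpace.exp (t • J)) ν)
        - (m * r / (m - 1)) • NormedSpace.exp ((ω * t) • J) ν)
        = J (NormedSpace.exp (t • J) zbar2)
          + c2 • (ω • J (NormedSpace.exp ((ω * t) • J) ν)
            - J (NormedSpace.exp (t • J) ν)) := by
      simp only [ContinuousLinearMap.sub_apply, map_sub, map_add, _root_.map_smul]
      exact vec_id2 _ _ _ _ _ _ hs2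
    rw [hv]
    exact hz2d
end
end

section
/- Let Ω be the open ball in ℝ³ of volume 1 centred at the origin and let m ∈ (0,½]. Then there exists r > 0, depending only on m, with the following property: for all distinct z_1, z_2 ∈ ℝ³ and every weight vector w ∈ ℝ² such that L³(C_1((z_1,z_2),w)) = m and L³(C_2((z_1,z_2),w)) = 1 − m, the centroids of the two Laguerre cells satisfy (1/m) ∫_{C_1((z_1,z_2),w)} x dx = r (z_1 − z_2)/|z_1 − z_2| and (1/(1−m)) ∫_{C_2((z_1,z_2),w)} x dx = (mr/(m−1)) (z_1 − z_2)/|z_1 − z_2|. In particular, m times the first centroid plus (1−m) times the second centroid equals 0. -/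
open MeasureTheory Set Filter
open scoped ENNReal Topology RealInnerProductSpace

noncomputable section

def e0 : E3 := EuclideanSpace.single 0 1
def Rb : ℝ := (3 / (4 * Real.pi)) ^ ((1:ℝ)/3)
lemma Rb_pos : 0 < Rb := Real.rpow_pos_of_pos (by positivity) _


lemma coord_eq_inner (x : E3) (i : Fin 3) : x i = ⟪x, EuclideanSpace.single i (1:ℝ)⟫ := by
  rw [EuclideanSpace.inner_single_right]; simp

lemma abs_coord_le_norm (x : E3) (i : Fin 3) : |x i| ≤ ‖x‖ := by
  rw [coord_eq_inner x i]
  calc |⟪x, EuclideanSpace.single i (1:ℝ)⟫| ≤ ‖x‖ * ‖EuclideanSpace.single i (1:ℝ)‖ :=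
        abs_real_inner_le_norm _ _
    _ = ‖x‖ := by rw [EuclideanSpace.norm_single]; simp

def capSet (t : ℝ) : Set E3 := {x : E3 | ‖x‖ < Rb ∧ x 0 ≤ t}

lemma measurable_coord (i : Fin 3) : Measurable (fun x : E3 => x i) :=
  (EuclideanSpace.proj (𝕜 := ℝ) i).continuous.measurable

lemma measurableSet_capSet (t : ℝ) : MeasurableSet (capSet t) :=
  (measurableSet_lt measurable_norm measurable_const).inter
    (measurableSet_le (measurable_coord 0) measurable_const)

lemma capSet_subset_ball (t : ℝ) : capSet t ⊆ Metric.ball (0:E3) Rb := by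
  intro x hx; simpa [Metric.mem_ball, dist_zero_right] using hx.1

lemma volume_capSet_lt_top (t : ℝ) : volume (capSet t) < ⊤ :=
  lt_of_le_of_lt (measure_mono (capSet_subset_ball t)) measure_ball_lt_top

lemma subset_ball_norm {s : Set E3} (hs : s ⊆ Metric.ball (0:E3) Rb) {x : E3} (hx : x ∈ s) :
    ‖x‖ < Rb := by simpa [Metric.mem_ball, dist_zero_right] using hs hx

lemma integrableOn_id_of_subset_ball {s : Set E3} (hs : s ⊆ Metric.ball (0:E3) Rb)
    (hsm : MeasurableSet s) :
    IntegrableOn (fun x : E3 => x) s volume := by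
  apply Measure.integrableOn_of_bounded (M := Rb)
  · exact ((measure_mono hs).trans_lt measure_ball_lt_top).ne
  · exact aestronglyMeasurable_id
  · filter_upwards [ae_restrict_mem hsm] with x hx
    exact (subset_ball_norm hs hx).le

lemma integrableOn_coord_of_subset_ball {s : Set E3} (hs : s ⊆ Metric.ball (0:E3) Rb)
    (hsm : MeasurableSet s) (i : Fin 3) :
    IntegrableOn (fun x : E3 => x i) s volume := by
  apply Measure.integrableOn_of_bounded (M := Rb)
  · exact ((measure_mono hs).trans_lt measure_ball_lt_top).ne
  · exact (measurable_coord i).aestronglyMeasurable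
  · filter_upwards [ae_restrict_mem hsm] with x hx
    exact le_trans (by simpa using abs_coord_le_norm x i) (subset_ball_norm hs hx).le

/-- negation of coordinate i as a linear isometry equiv -/
def negCoord (i : Fin 3) : E3 ≃ₗᵢ[ℝ] E3 :=
  LinearIsometryEquiv.piLpCongrRight 2
    (fun j => if j = i then LinearIsometryEquiv.neg ℝ else LinearIsometryEquiv.refl ℝ ℝ)

lemma negCoord_apply (i j : Fin 3) (x : E3) :
    negCoord i x j = if j = i then -(x j) else x j := by
  rw [negCoord, LinearIsometryEquiv.piLpCongrRight_apply]
  by_cases h : j = i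
  · subst h; simp
  · simp [h]

lemma negCoord_image_capSet {i : Fin 3} (hi : i ≠ 0) (t : ℝ) :
    (negCoord i) ⁻¹' (capSet t) = capSet t := by
  ext x
  simp only [mem_preimage, capSet, mem_setOf_eq, LinearIsometryEquiv.norm_map]
  rw [negCoord_apply]
  simp [Ne.symm hi]

lemma integral_coord_capSet_eq_zero {i : Fin 3} (hi : i ≠ 0) (t : ℝ) :
    ∫ x in capSet t, x i = 0 := by
  have key := ((negCoord i).measurePreserving).setIntegral_preimage_emb
    ((negCoord i).toHomeomorph.measurableEmbedding) (fun x : E3 => x i) (capSet t)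
  rw [negCoord_image_capSet hi] at key
  have : (fun x : E3 => negCoord i x i) = fun x : E3 => -(x i) := by
    funext x; rw [negCoord_apply]; simp
  rw [show (fun x : E3 => (negCoord i x) i) = fun x : E3 => -(x i) from this,
    integral_neg] at key
  linarith

lemma integral_capSet_eq (t : ℝ) :
    (∫ x in capSet t, x) = (∫ x in capSet t, x 0) • e0 := by
  have hcoord : ∀ i : Fin 3, (∫ x in capSet t, x) i = ∫ x in capSet t, x i := by
    intro i
    have := ContinuousLinearMap.integral_comp_comm (EuclideanSpace.proj (𝕜 := ℝ) i)
      (integrableOn_id_of_subset_ball (capSet_subset_ball t) (measurableSet_capSet t))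
    simpa using this.symm
  ext i
  rw [hcoord i]
  by_cases h0 : i = 0
  · subst h0; simp [e0, EuclideanSpace.single_apply]
  · rw [integral_coord_capSet_eq_zero h0 t]
    simp [e0, EuclideanSpace.single_apply, h0]

/-- rotation (reflection) sending e0 to a given unit vector -/
def rotTo (u : E3) : E3 ≃ₗᵢ[ℝ] E3 := Submodule.reflection (ℝ ∙ (e0 - u))ᗮ

lemma rotTo_e0 {u : E3} (hu : ‖u‖ = 1) : rotTo u e0 = u := by
  apply Submodule.reflection_sub
  rw [hu, e0, EuclideanSpace.norm_single]; simp

lemma inner_rotTo {u : E3} (hu : ‖u‖ = 1) (x : E3) : ⟪rotTo u x, u⟫ = x 0 := by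
  have h := LinearIsometryEquiv.inner_map_map (𝕜 := ℝ) (rotTo u) x e0
  rw [rotTo_e0 hu] at h
  rw [h, coord_eq_inner x 0]
  rfl

lemma rotTo_image_capSet {u : E3} (hu : ‖u‖ = 1) (t : ℝ) :
    (rotTo u) '' (capSet t) = {x : E3 | ‖x‖ < Rb ∧ ⟪x, u⟫ ≤ t} := by
  ext x
  constructor
  · rintro ⟨y, ⟨hy1, hy2⟩, rfl⟩
    refine ⟨by rwa [LinearIsometryEquiv.norm_map], ?_⟩
    rwa [inner_rotTo hu]
  · rintro ⟨h1, h2⟩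
    refine ⟨(rotTo u).symm x, ⟨?_, ?_⟩, by simp⟩
    · rwa [LinearIsometryEquiv.norm_map]
    · have : ((rotTo u).symm x) 0 = ⟪rotTo u ((rotTo u).symm x), u⟫ := (inner_rotTo hu _).symm
      rw [this]; simpa using h2

lemma measurableSet_halfcap (u : E3) (t : ℝ) :
    MeasurableSet {x : E3 | ‖x‖ < Rb ∧ ⟪x, u⟫ ≤ t} :=
  (measurableSet_lt measurable_norm measurable_const).inter
    (measurableSet_le hm measurable_const)
  where hm : Measurable (fun x : E3 => ⟪x, u⟫) :=
    Continuous.measurable (continuous_id.inner continuous_const)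

lemma halfcap_subset_ball (u : E3) (t : ℝ) :
    {x : E3 | ‖x‖ < Rb ∧ ⟪x, u⟫ ≤ t} ⊆ Metric.ball (0:E3) Rb := by
  intro x hx; simpa [Metric.mem_ball, dist_zero_right] using hx.1

lemma volume_halfcap {u : E3} (hu : ‖u‖ = 1) (t : ℝ) :
    volume {x : E3 | ‖x‖ < Rb ∧ ⟪x, u⟫ ≤ t} = volume (capSet t) := by
  rw [← rotTo_image_capSet hu t]
  rw [LinearIsometryEquiv.image_eq_preimage_symm]
  exact ((rotTo u).symm.measurePreserving).measure_preimage
    (measurableSet_capSet t).nullMeasurableSet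

lemma integral_halfcap {u : E3} (hu : ‖u‖ = 1) (t : ℝ) :
    (∫ x in {x : E3 | ‖x‖ < Rb ∧ ⟪x, u⟫ ≤ t}, x) = (∫ x in capSet t, x 0) • u := by
  rw [← rotTo_image_capSet hu t]
  rw [(rotTo u).measurePreserving.setIntegral_image_emb
    ((rotTo u).toHomeomorph.measurableEmbedding) (fun x => x) (capSet t)]
  rw [show (∫ x in capSet t, (rotTo u) x ∂volume)
      = (rotTo u).toLinearIsometry (∫ x in capSet t, x)
    from (rotTo u).toLinearIsometry.integral_comp_comm (fun x : E3 => x)]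
  rw [integral_capSet_eq t]
  simp only [LinearIsometryEquiv.coe_toLinearIsometry, LinearIsometryEquiv.map_smul]
  rw [rotTo_e0 hu]

lemma volume_ball_Rb : volume (Metric.ball (0:E3) Rb) = 1 := by
  rw [EuclideanSpace.volume_ball]
  have hπ := Real.pi_pos
  have hs : Real.sqrt Real.pi > 0 := Real.sqrt_pos.mpr hπ
  have hg : Real.Gamma ((Fintype.card (Fin 3)) / 2 + 1) = 3/4 * Real.sqrt Real.pi := by
    norm_num
    rw [show (5:ℝ)/2 = 3/2 + 1 by norm_num, Real.Gamma_add_one (by norm_num),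
      show (3:ℝ)/2 = 1/2 + 1 by norm_num, Real.Gamma_add_one (by norm_num),
      Real.Gamma_one_half_eq]
    ring
  rw [hg]
  have h1 : Real.sqrt Real.pi ^ Fintype.card (Fin 3) / (3/4 * Real.sqrt Real.pi)
      = 4 * Real.pi / 3 := by
    have : Real.sqrt Real.pi ^ Fintype.card (Fin 3)
        = Real.pi * Real.sqrt Real.pi := by
      rw [Fintype.card_fin, pow_succ, Real.sq_sqrt hπ.le, mul_comm]
    rw [this]; field_simp
  rw [h1]
  have h2 : (ENNReal.ofReal Rb) ^ Fintype.card (Fin 3) = ENNReal.ofReal (3 / (4 * Real.pi)) := by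
    rw [← ENNReal.ofReal_pow Rb_pos.le]
    congr 1
    rw [Fintype.card_fin, Rb, ← Real.rpow_natCast (_ ^ _) 3, ← Real.rpow_mul (by positivity)]
    norm_num
  rw [h2, ← ENNReal.ofReal_mul (by positivity)]
  rw [show 3 / (4 * Real.pi) * (4 * Real.pi / 3) = 1 by field_simp]
  exact ENNReal.ofReal_one

/-- hyperplane has measure zero -/
lemma hyperplane_null (u : E3) (hu : u ≠ 0) (c : ℝ) :
    volume {x : E3 | ⟪x, u⟫ = c} = 0 := by
  set K : Submodule ℝ E3 := LinearMap.ker (innerSL ℝ u).toLinearMap with hK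
  have hKne : K ≠ ⊤ := by
    intro h
    apply hu
    have : u ∈ K := h ▸ Submodule.mem_top
    have h2 : ⟪u, u⟫ = 0 := this
    exact inner_self_eq_zero.mp h2
  have hn : (‖u‖:ℝ)^2 ≠ 0 := by
    have := norm_pos_iff.mpr hu; positivity
  have hset : {x : E3 | ⟪x, u⟫ = c} = (AffineSubspace.mk' ((c / ‖u‖^2) • u) K : Set E3) := by
    ext x
    simp only [mem_setOf_eq, AffineSubspace.mem_coe, AffineSubspace.mem_mk',
      vsub_eq_sub, hK, LinearMap.mem_ker, ContinuousLinearMap.coe_coe, innerSL_apply_apply]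
    rw [inner_sub_right, real_inner_smul_right, real_inner_self_eq_norm_sq,
      div_mul_cancel₀ _ hn, real_inner_comm u x, sub_eq_zero]
  rw [hset]
  exact Measure.addHaar_affineSubspace volume _ (by
    intro h
    apply hKne
    have := congrArg AffineSubspace.direction h
    rwa [AffineSubspace.direction_mk', AffineSubspace.direction_top] at this)

lemma coordplane_null (c : ℝ) : volume {x : E3 | x 0 = c} = 0 := by
  have : {x : E3 | x 0 = c} = {x : E3 | ⟪x, e0⟫ = c} := by
    ext x; rw [mem_setOf_eq, mem_setOf_eq, coord_eq_inner x 0]; rfl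
  rw [this]
  exact hyperplane_null e0 (by
    intro h
    have : ‖e0‖ = 1 := by rw [e0, EuclideanSpace.norm_single]; simp
    rw [h] at this; simp at this) c

lemma capSet_eq_empty {t : ℝ} (ht : t ≤ -Rb) : capSet t = ∅ := by
  ext x
  simp only [capSet, mem_setOf_eq, mem_empty_iff_false, iff_false, not_and]
  intro h1 h2
  have h3 : -(x 0) ≤ ‖x‖ := le_trans (neg_le_abs _) (abs_coord_le_norm x 0)
  linarith

lemma capSet_eq_ball {t : ℝ} (ht : Rb ≤ t) : capSet t = Metric.ball (0:E3) Rb := by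
  ext x
  simp only [capSet, mem_setOf_eq, Metric.mem_ball, dist_zero_right]
  constructor
  · exact fun h => h.1
  · intro h
    refine ⟨h, ?_⟩
    have h2 := abs_coord_le_norm x 0
    exact le_trans (le_abs_self _) (le_trans h2 (le_trans h.le ht))

lemma capSet_mono : Monotone (fun t => capSet t) := by
  intro a b hab x hx
  exact ⟨hx.1, hx.2.trans hab⟩

lemma V_strictmono {a b : ℝ} (ha : -Rb ≤ a) (hb : b ≤ Rb) (hab : a < b) :
    volume (capSet a) < volume (capSet b) := by
  set U : Set E3 := {x : E3 | ‖x‖ < Rb ∧ a < x 0 ∧ x 0 < b} with hU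
  have hUopen : IsOpen U := by
    apply IsOpen.inter (isOpen_lt continuous_norm continuous_const)
    exact IsOpen.inter
      (isOpen_lt continuous_const (EuclideanSpace.proj (𝕜 := ℝ) (0:Fin 3)).continuous)
      (isOpen_lt (EuclideanSpace.proj (𝕜 := ℝ) (0:Fin 3)).continuous continuous_const)
  have hUne : U.Nonempty := by
    have hc : (EuclideanSpace.single (0:Fin 3) ((a+b)/2) : E3) 0 = (a+b)/2 := by simp
    refine ⟨EuclideanSpace.single 0 ((a+b)/2), ?_, ?_, ?_⟩
    · rw [EuclideanSpace.norm_single, Real.norm_eq_abs, abs_lt]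
      constructor <;> linarith
    · rw [hc]; linarith
    · rw [hc]; linarith
  have hUpos : 0 < volume U := hUopen.measure_pos volume hUne
  have hdisj : Disjoint (capSet a) U := by
    rw [Set.disjoint_left]
    intro x hx hx'
    exact absurd hx.2 (not_le.mpr hx'.2.1)
  have hsub : capSet a ∪ U ⊆ capSet b := by
    rintro x (hx | hx)
    · exact ⟨hx.1, hx.2.trans hab.le⟩
    · exact ⟨hx.1, hx.2.2.le⟩
  calc volume (capSet a) < volume (capSet a) + volume U :=
        ENNReal.lt_add_right (volume_capSet_lt_top a).ne hUpos.ne'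
    _ = volume (capSet a ∪ U) := (measure_union hdisj hUopen.measurableSet).symm
    _ ≤ volume (capSet b) := measure_mono hsub

lemma V_zero : volume (capSet 0) = ENNReal.ofReal (1/2) := by
  set B : Set E3 := {x : E3 | ‖x‖ < Rb ∧ 0 < x 0} with hB
  have hBmeas : MeasurableSet B :=
    (measurableSet_lt measurable_norm measurable_const).inter
      (measurableSet_lt measurable_const (measurable_coord 0))
  have hdisj : Disjoint (capSet 0) B := by
    rw [Set.disjoint_left]
    intro x hx hx'
    exact absurd hx.2 (not_le.mpr hx'.2)
  have hunion : capSet 0 ∪ B = Metric.ball (0:E3) Rb := by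
    ext x
    simp only [capSet, hB, mem_union, mem_setOf_eq, Metric.mem_ball, dist_zero_right]
    constructor
    · rintro (h | h) <;> exact h.1
    · intro h
      rcases le_or_gt (x 0) 0 with h0 | h0
      · exact Or.inl ⟨h, h0⟩
      · exact Or.inr ⟨h, h0⟩
  have hsum : volume (capSet 0) + volume B = 1 := by
    rw [← measure_union hdisj hBmeas, hunion, volume_ball_Rb]
  -- symmetry: volume B = volume (capSet 0)
  have hneg : (LinearIsometryEquiv.neg ℝ (E := E3)) ⁻¹' (capSet 0)
      = {x : E3 | ‖x‖ < Rb ∧ 0 ≤ x 0} := by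
    ext x
    simp only [mem_preimage, capSet, mem_setOf_eq, LinearIsometryEquiv.coe_neg]
    rw [norm_neg]
    constructor
    · rintro ⟨h1, h2⟩
      refine ⟨h1, ?_⟩
      have : -(x 0) ≤ 0 := h2
      linarith
    · rintro ⟨h1, h2⟩
      refine ⟨h1, ?_⟩
      show -(x 0) ≤ 0
      linarith
  have hvol1 : volume {x : E3 | ‖x‖ < Rb ∧ 0 ≤ x 0} = volume (capSet 0) :=
    (LinearIsometryEquiv.neg ℝ (E := E3)).measurePreserving.measure_preimage
      (measurableSet_capSet 0).nullMeasurableSet ▸ congrArg volume hneg ▸ rfl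
  have hvolB : volume B = volume (capSet 0) := by
    apply le_antisymm
    · rw [← hvol1]
      exact measure_mono (fun x hx => ⟨hx.1, hx.2.le⟩)
    · rw [← hvol1]
      have hsplit : {x : E3 | ‖x‖ < Rb ∧ 0 ≤ x 0} ⊆ B ∪ {x : E3 | x 0 = 0} := by
        intro x hx
        rcases lt_or_eq_of_le hx.2 with h | h
        · exact Or.inl ⟨hx.1, h⟩
        · exact Or.inr h.symm
      calc volume {x : E3 | ‖x‖ < Rb ∧ 0 ≤ x 0}
          ≤ volume B + volume {x : E3 | x 0 = 0} :=
            le_trans (measure_mono hsplit) (measure_union_le _ _)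
        _ = volume B := by rw [coordplane_null]; ring
  rw [hvolB] at hsum
  have h2 : (2:ℝ≥0∞) * volume (capSet 0) = 1 := by rw [two_mul]; exact hsum
  have : volume (capSet 0) = 2⁻¹ := by
    have := congrArg (fun x => 2⁻¹ * x) h2
    simpa [← mul_assoc, ENNReal.inv_mul_cancel (show (2:ℝ≥0∞) ≠ 0 by norm_num)
      (show (2:ℝ≥0∞) ≠ ⊤ by norm_num)] using this
  rw [this]
  rw [ENNReal.ofReal_div_of_pos (by norm_num)]
  norm_num

lemma neg_Rb_lt_of_mem {t : ℝ} {x : E3} (hx : x ∈ capSet t) : -Rb < t := by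
  have h1 : -(x 0) ≤ ‖x‖ := le_trans (neg_le_abs _) (abs_coord_le_norm x 0)
  have := hx.1; have := hx.2; linarith

lemma exists_capSet_volume (m : ℝ) (hm : 0 < m) (hm2 : m ≤ 1/2) :
    ∃ t0 : ℝ, -Rb < t0 ∧ t0 ≤ 0 ∧ volume (capSet t0) = ENNReal.ofReal m := by
  set A := {t : ℝ | ENNReal.ofReal m ≤ volume (capSet t)} with hA
  have h0A : (0:ℝ) ∈ A := by
    rw [hA, mem_setOf_eq, V_zero]
    exact ENNReal.ofReal_le_ofReal hm2
  have hbdd : BddBelow A := by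
    refine ⟨-Rb, fun t ht => ?_⟩
    by_contra h
    push_neg at h
    rw [hA, mem_setOf_eq, capSet_eq_empty h.le, measure_empty] at ht
    exact absurd ht (by simpa using (ENNReal.ofReal_pos.mpr hm).not_ge)
  set t0 := sInf A with ht0def
  have ht0le : t0 ≤ 0 := csInf_le hbdd h0A
  have hge : ENNReal.ofReal m ≤ volume (capSet t0) := by
    have hseq : Antitone (fun n : ℕ => capSet (t0 + ((n:ℝ)+1)⁻¹)) := by
      intro p q hpq
      apply capSet_mono
      have : ((q:ℝ)+1)⁻¹ ≤ ((p:ℝ)+1)⁻¹ := by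
        apply inv_anti₀ (by positivity)
        exact_mod_cast add_le_add_left (Nat.cast_le.mpr hpq) 1
      linarith
    have hiInter : (⋂ n : ℕ, capSet (t0 + ((n:ℝ)+1)⁻¹)) = capSet t0 := by
      ext x
      simp only [mem_iInter, capSet, mem_setOf_eq]
      constructor
      · intro h
        refine ⟨(h 0).1, ?_⟩
        have hlim : Tendsto (fun n : ℕ => t0 + ((n:ℝ)+1)⁻¹) atTop (𝓝 t0) := by
          have := tendsto_one_div_add_atTop_nhds_zero_nat (𝕜 := ℝ)
          simpa [one_div] using tendsto_const_nhds.add this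
        exact ge_of_tendsto hlim (Eventually.of_forall (fun n => (h n).2))
      · intro h n
        exact ⟨h.1, le_trans h.2 (by linarith [show (0:ℝ) < ((n:ℝ)+1)⁻¹ by positivity])⟩
    have htend := tendsto_measure_iInter_atTop
      (fun n => (measurableSet_capSet _).nullMeasurableSet) hseq ⟨0, (volume_capSet_lt_top _).ne⟩
    rw [hiInter] at htend
    refine ge_of_tendsto htend (Eventually.of_forall (fun n => ?_))
    obtain ⟨a, haA, halt⟩ := Real.lt_sInf_add_pos ⟨0, h0A⟩
      (show (0:ℝ) < ((n:ℝ)+1)⁻¹ by positivity)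
    exact le_trans haA (measure_mono (capSet_mono halt.le))
  have hle : volume (capSet t0) ≤ ENNReal.ofReal m := by
    have hopen_le : volume {x : E3 | ‖x‖ < Rb ∧ x 0 < t0} ≤ ENNReal.ofReal m := by
      have hunion : {x : E3 | ‖x‖ < Rb ∧ x 0 < t0} = ⋃ n : ℕ, capSet (t0 - ((n:ℝ)+1)⁻¹) := by
        ext x
        simp only [mem_iUnion, capSet, mem_setOf_eq]
        constructor
        · intro h
          obtain ⟨n, hn⟩ := exists_nat_one_div_lt (show (0:ℝ) < t0 - x 0 by linarith [h.2])
          exact ⟨n, h.1, by rw [one_div] at hn; linarith⟩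
        · rintro ⟨n, h1, h2⟩
          refine ⟨h1, ?_⟩
          have : (0:ℝ) < ((n:ℝ)+1)⁻¹ := by positivity
          linarith
      rw [hunion]
      rw [Directed.measure_iUnion ?_]
      · apply iSup_le
        intro n
        have hnotmem : (t0 - ((n:ℝ)+1)⁻¹) ∉ A := by
          intro hmem
          have := csInf_le hbdd hmem
          have hpos : (0:ℝ) < ((n:ℝ)+1)⁻¹ := by positivity
          rw [← ht0def] at this
          linarith
        rw [hA, mem_setOf_eq, not_le] at hnotmem
        exact hnotmem.le
      · apply Monotone.directed_le
        intro p q hpq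
        apply capSet_mono
        have : ((q:ℝ)+1)⁻¹ ≤ ((p:ℝ)+1)⁻¹ := by
          apply inv_anti₀ (by positivity)
          exact_mod_cast add_le_add_left (Nat.cast_le.mpr hpq) 1
        linarith
    have hsplit : capSet t0 ⊆ {x : E3 | ‖x‖ < Rb ∧ x 0 < t0} ∪ {x : E3 | x 0 = t0} := by
      intro x hx
      rcases lt_or_eq_of_le hx.2 with h | h
      · exact Or.inl ⟨hx.1, h⟩
      · exact Or.inr h
    calc volume (capSet t0)
        ≤ volume {x : E3 | ‖x‖ < Rb ∧ x 0 < t0} + volume {x : E3 | x 0 = t0} :=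
          le_trans (measure_mono hsplit) (measure_union_le _ _)
      _ ≤ ENNReal.ofReal m := by rw [coordplane_null]; simpa using hopen_le
  have heq : volume (capSet t0) = ENNReal.ofReal m := le_antisymm hle hge
  have hne : -Rb < t0 := by
    have hpos : volume (capSet t0) ≠ 0 := by
      rw [heq]; exact (ENNReal.ofReal_pos.mpr hm).ne'
    obtain ⟨x, hx⟩ := nonempty_of_measure_ne_zero hpos
    exact neg_Rb_lt_of_mem hx
  exact ⟨t0, hne, ht0le, heq⟩

lemma integral_coord0_neg {t0 : ℝ} (ht0 : t0 ≤ 0) (hpos : 0 < volume (capSet t0)) :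
    (∫ x in capSet t0, x 0) < 0 := by
  have hint : IntegrableOn (fun x : E3 => -(x 0)) (capSet t0) volume :=
    (integrableOn_coord_of_subset_ball (capSet_subset_ball t0) (measurableSet_capSet t0) 0).neg
  have hnn : 0 ≤ᵐ[volume.restrict (capSet t0)] (fun x : E3 => -(x 0)) := by
    filter_upwards [ae_restrict_mem (measurableSet_capSet t0)] with x hx
    have := hx.2; simp; linarith
  have hsupp : 0 < volume (Function.support (fun x : E3 => -(x 0)) ∩ capSet t0) := by
    have hsub : capSet t0 ⊆ (Function.support (fun x : E3 => -(x 0)) ∩ capSet t0)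
        ∪ {x : E3 | x 0 = 0} := by
      intro x hx
      by_cases h : x 0 = 0
      · exact Or.inr h
      · exact Or.inl ⟨by simp [Function.mem_support, h], hx⟩
    have hle2 : volume (capSet t0)
        ≤ volume (Function.support (fun x : E3 => -(x 0)) ∩ capSet t0)
          + volume {x : E3 | x 0 = 0} :=
      le_trans (measure_mono hsub) (measure_union_le _ _)
    rw [coordplane_null, add_zero] at hle2
    exact lt_of_lt_of_le hpos hle2
  have := (setIntegral_pos_iff_support_of_nonneg_ae hnn hint).mpr hsupp
  rw [integral_neg] at this
  linarith

lemma integral_ball_zero : (∫ x in Metric.ball (0:E3) Rb, x) = 0 := by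
  set N := LinearIsometryEquiv.neg ℝ (E := E3) with hN
  have hpre : N ⁻¹' (Metric.ball (0:E3) Rb) = Metric.ball (0:E3) Rb := by
    ext x
    simp [hN, Metric.mem_ball, dist_zero_right]
  have key := N.measurePreserving.setIntegral_preimage_emb
    N.toHomeomorph.measurableEmbedding (fun x : E3 => x) (Metric.ball (0:E3) Rb)
  rw [hpre] at key
  have hNx : (fun x : E3 => N x) = fun x : E3 => -x := by
    funext x; simp [hN]
  rw [show (fun x : E3 => N x) = fun x : E3 => -x from hNx] at key
  rw [integral_neg] at key
  have : (2:ℝ) • (∫ x in Metric.ball (0:E3) Rb, x) = 0 := by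
    rw [two_smul]
    nth_rewrite 1 [← key]
    simp
  have h2 := congrArg (fun v => (2:ℝ)⁻¹ • v) this
  simpa [smul_smul] using h2

lemma measurableSet_cohalfcap (u : E3) (t : ℝ) :
    MeasurableSet {x : E3 | ‖x‖ < Rb ∧ t ≤ ⟪x, u⟫} :=
  (measurableSet_lt measurable_norm measurable_const).inter
    (measurableSet_le measurable_const hm)
  where hm : Measurable (fun x : E3 => ⟪x, u⟫) :=
    Continuous.measurable (continuous_id.inner continuous_const)

lemma ineq_iff_aux {I K d : ℝ} (hd : 0 < d) : d⁻¹ * I ≤ K / (2*d) ↔ 2*I ≤ K := by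
  rw [inv_mul_eq_div, div_le_div_iff₀ hd (by positivity)]
  constructor <;> intro h <;> nlinarith

lemma ineq_iff_aux' {I K d : ℝ} (hd : 0 < d) : K / (2*d) ≤ d⁻¹ * I ↔ K ≤ 2*I := by
  rw [inv_mul_eq_div, div_le_div_iff₀ (by positivity) hd]
  constructor <;> intro h <;> nlinarith

lemma lagCell_eq (z1 z2 : E3) (hz : z1 ≠ z2) (w : Fin 2 → ℝ) :
    lagCell (Metric.ball 0 Rb) ![z1, z2] w 0
      = {x : E3 | ‖x‖ < Rb ∧ ⟪x, ‖z2 - z1‖⁻¹ • (z2 - z1)⟫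
          ≤ (‖z2‖^2 - ‖z1‖^2 + w 0 - w 1)/(2*‖z2 - z1‖)} ∧
    lagCell (Metric.ball 0 Rb) ![z1, z2] w 1
      = {x : E3 | ‖x‖ < Rb ∧ (‖z2‖^2 - ‖z1‖^2 + w 0 - w 1)/(2*‖z2 - z1‖)
          ≤ ⟪x, ‖z2 - z1‖⁻¹ • (z2 - z1)⟫} := by
  have hd : (0:ℝ) < ‖z2 - z1‖ := norm_pos_iff.mpr (sub_ne_zero.mpr (Ne.symm hz))
  have key : ∀ x : E3, (‖x - z1‖^2 - w 0 ≤ ‖x - z2‖^2 - w 1)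
      ↔ ⟪x, ‖z2 - z1‖⁻¹ • (z2 - z1)⟫ ≤ (‖z2‖^2 - ‖z1‖^2 + w 0 - w 1)/(2*‖z2 - z1‖) := by
    intro x
    rw [real_inner_smul_right, ineq_iff_aux hd, inner_sub_right]
    have h1 : ‖x - z1‖^2 = ‖x‖^2 - 2*⟪x,z1⟫ + ‖z1‖^2 := by rw [@norm_sub_sq_real]
    have h2 : ‖x - z2‖^2 = ‖x‖^2 - 2*⟪x,z2⟫ + ‖z2‖^2 := by rw [@norm_sub_sq_real]
    rw [h1, h2]
    constructor <;> intro h <;> linarith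
  have key2 : ∀ x : E3, (‖x - z2‖^2 - w 1 ≤ ‖x - z1‖^2 - w 0)
      ↔ (‖z2‖^2 - ‖z1‖^2 + w 0 - w 1)/(2*‖z2 - z1‖) ≤ ⟪x, ‖z2 - z1‖⁻¹ • (z2 - z1)⟫ := by
    intro x
    rw [real_inner_smul_right, ineq_iff_aux' hd, inner_sub_right]
    have h1 : ‖x - z1‖^2 = ‖x‖^2 - 2*⟪x,z1⟫ + ‖z1‖^2 := by rw [@norm_sub_sq_real]
    have h2 : ‖x - z2‖^2 = ‖x‖^2 - 2*⟪x,z2⟫ + ‖z2‖^2 := by rw [@norm_sub_sq_real]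
    rw [h1, h2]
    constructor <;> intro h <;> linarith
  constructor
  · ext x
    simp only [lagCell, mem_setOf_eq, mem_ball_zero_iff, Fin.forall_fin_two,
      Matrix.cons_val_zero, Matrix.cons_val_one, Matrix.head_cons]
    rw [← key x]
    tauto
  · ext x
    simp only [lagCell, mem_setOf_eq, mem_ball_zero_iff, Fin.forall_fin_two,
      Matrix.cons_val_zero, Matrix.cons_val_one, Matrix.head_cons]
    constructor
    · rintro ⟨h1, h2, -⟩
      exact ⟨h1, (key2 x).mp h2⟩
    · rintro ⟨h1, h2⟩
      exact ⟨h1, (key2 x).mpr h2, le_refl _⟩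

/-- **Structure of the Laguerre-cell centroids for two masses in a ball** (Example 6.2 of
Bourne, Egan, Pelloni, Wilkinson): there is a constant `r > 0`, depending only on `m`, such
that for any two distinct seeds and any weights realising the masses `(m, 1-m)`, the cell
centroids are `r (z₁-z₂)/|z₁-z₂|` and `(mr/(m-1)) (z₁-z₂)/|z₁-z₂|`; in particular the
weighted sum of the centroids is the centre of the ball. -/
theorem two_mass_centroids_in_ball
    (Ω : Set E3) (hΩ : Ω = Metric.ball 0 ((3 / (4 * Real.pi)) ^ ((1:ℝ) / 3)))
    (m : ℝ) (hm : 0 < m) (hm2 : m ≤ 1/2) :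
    ∃ r : ℝ, 0 < r ∧
      ∀ z1 z2 : E3, z1 ≠ z2 → ∀ w : Fin 2 → ℝ,
        volume (lagCell Ω ![z1, z2] w 0) = ENNReal.ofReal m →
        volume (lagCell Ω ![z1, z2] w 1) = ENNReal.ofReal (1 - m) →
        m⁻¹ • (∫ x in lagCell Ω ![z1, z2] w 0, x)
            = (r / ‖z1 - z2‖) • (z1 - z2) ∧
        (1 - m)⁻¹ • (∫ x in lagCell Ω ![z1, z2] w 1, x)
            = (m * r / (m - 1) / ‖z1 - z2‖) • (z1 - z2) ∧
        m • (m⁻¹ • ∫ x in lagCell Ω ![z1, z2] w 0, x)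
          + (1 - m) • ((1 - m)⁻¹ • ∫ x in lagCell Ω ![z1, z2] w 1, x) = 0 := by
  have hΩ' : Ω = Metric.ball 0 Rb := hΩ
  subst hΩ'
  have h1m : (0:ℝ) < 1 - m := by linarith
  obtain ⟨t0, ht0l, ht0r, ht0V⟩ := exists_capSet_volume m hm hm2
  set c := ∫ x in capSet t0, x 0 with hcdef
  have hc : c < 0 := integral_coord0_neg ht0r (by
    rw [ht0V]; exact ENNReal.ofReal_pos.mpr hm)
  refine ⟨-c/m, div_pos (neg_pos.mpr hc) hm, ?_⟩
  intro z1 z2 hz w hvol0 hvol1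
  obtain ⟨hcell0, hcell1⟩ := lagCell_eq z1 z2 hz w
  set d : ℝ := ‖z2 - z1‖ with hddef
  have hd : (0:ℝ) < d := norm_pos_iff.mpr (sub_ne_zero.mpr (Ne.symm hz))
  set u : E3 := d⁻¹ • (z2 - z1) with hudef
  have hu : ‖u‖ = 1 := by
    rw [hudef, norm_smul, norm_inv, norm_norm, ← hddef, inv_mul_cancel₀ hd.ne']
  have hune : u ≠ 0 := by
    intro h; rw [h, norm_zero] at hu; norm_num at hu
  set s' : ℝ := (‖z2‖^2 - ‖z1‖^2 + w 0 - w 1)/(2*d) with hs'def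
  -- volume of the cap determines s' = t0
  have hVs : volume (capSet s') = ENNReal.ofReal m := by
    rw [← volume_halfcap hu s', ← hcell0]; exact hvol0
  have hs'1 : -Rb < s' := by
    have hpos : volume (capSet s') ≠ 0 := by
      rw [hVs]; exact (ENNReal.ofReal_pos.mpr hm).ne'
    obtain ⟨x, hx⟩ := nonempty_of_measure_ne_zero hpos
    exact neg_Rb_lt_of_mem hx
  have hs'2 : s' < Rb := by
    by_contra h
    push_neg at h
    have h1 : (1:ℝ≥0∞) = ENNReal.ofReal m := by
      rw [← volume_ball_Rb, ← capSet_eq_ball h]; exact hVs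
    have hlt : ENNReal.ofReal m < 1 :=
      lt_of_le_of_lt (ENNReal.ofReal_le_ofReal hm2) (ENNReal.ofReal_lt_one.mpr (by norm_num))
    rw [← h1] at hlt
    exact lt_irrefl _ hlt
  have hs' : s' = t0 := by
    rcases lt_trichotomy s' t0 with h | h | h
    · have := V_strictmono hs'1.le (le_trans ht0r Rb_pos.le) h
      rw [hVs, ht0V] at this
      exact absurd this (lt_irrefl _)
    · exact h
    · have := V_strictmono ht0l.le hs'2.le h
      rw [hVs, ht0V] at this
      exact absurd this (lt_irrefl _)
  -- the centroid integrals
  have hI0 : (∫ x in lagCell (Metric.ball 0 Rb) ![z1, z2] w 0, x) = c • u := by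
    rw [hcell0, integral_halfcap hu s', hs', hcdef]
  have hsub0 : lagCell (Metric.ball 0 Rb) ![z1, z2] w 0 ⊆ Metric.ball (0:E3) Rb := by
    rw [hcell0]; exact fun x hx => mem_ball_zero_iff.mpr hx.1
  have hsub1 : lagCell (Metric.ball 0 Rb) ![z1, z2] w 1 ⊆ Metric.ball (0:E3) Rb := by
    rw [hcell1]; exact fun x hx => mem_ball_zero_iff.mpr hx.1
  have hmeas0 : MeasurableSet (lagCell (Metric.ball 0 Rb) ![z1, z2] w 0) := by
    rw [hcell0]; exact measurableSet_halfcap u s'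
  have hmeas1 : MeasurableSet (lagCell (Metric.ball 0 Rb) ![z1, z2] w 1) := by
    rw [hcell1]; exact measurableSet_cohalfcap u s'
  have hAED : AEDisjoint volume (lagCell (Metric.ball 0 Rb) ![z1, z2] w 0)
      (lagCell (Metric.ball 0 Rb) ![z1, z2] w 1) := by
    refine measure_mono_null ?_ (hyperplane_null u hune s')
    rintro x ⟨hx0, hx1⟩
    rw [hcell0] at hx0
    rw [hcell1] at hx1
    exact le_antisymm hx0.2 hx1.2
  have hunion : lagCell (Metric.ball 0 Rb) ![z1, z2] w 0
      ∪ lagCell (Metric.ball 0 Rb) ![z1, z2] w 1 = Metric.ball (0:E3) Rb := by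
    rw [hcell0, hcell1]
    ext x
    simp only [mem_union, mem_setOf_eq, mem_ball_zero_iff]
    constructor
    · rintro (h | h) <;> exact h.1
    · intro h
      rcases le_total ⟪x, u⟫ s' with h2 | h2
      · exact Or.inl ⟨h, h2⟩
      · exact Or.inr ⟨h, h2⟩
  have hsum0 : (∫ x in lagCell (Metric.ball 0 Rb) ![z1, z2] w 0, x)
      + (∫ x in lagCell (Metric.ball 0 Rb) ![z1, z2] w 1, x) = 0 := by
    rw [← integral_union_ae hAED hmeas1.nullMeasurableSet
      (integrableOn_id_of_subset_ball hsub0 hmeas0)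
      (integrableOn_id_of_subset_ball hsub1 hmeas1)]
    rw [hunion]
    exact integral_ball_zero
  have hI1 : (∫ x in lagCell (Metric.ball 0 Rb) ![z1, z2] w 1, x) = (-c) • u := by
    rw [neg_smul, ← hI0]
    exact eq_neg_of_add_eq_zero_right hsum0
  have hnorm : ‖z1 - z2‖ = d := by rw [hddef, norm_sub_rev]
  have hz12 : z1 - z2 = -(z2 - z1) := (neg_sub z2 z1).symm
  refine ⟨?_, ?_, ?_⟩
  · rw [hI0, hnorm, hz12, hudef, smul_smul, smul_smul, smul_neg, ← neg_smul]
    congr 1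
    field_simp
  · rw [hI1, hnorm, hz12, hudef, smul_smul, smul_smul, smul_neg, ← neg_smul]
    congr 1
    have hm1 : m - 1 ≠ 0 := by linarith
    field_simp
    ring
  · rw [smul_inv_smul₀ hm.ne', smul_inv_smul₀ h1m.ne', hsum0]
end
end
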